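/- arXiv:2601.15814 — 3 statements merged into one kernel-verified Lean document; each statement's English description precedes it below -/
import Mathlib

section
/- For every substring-free set S of strings over the DNA alphabet, the minimum total weight of a cycle cover of the distance graph G_S is at most OPT(S); that is, w(CYC(G_S)) ≤ OPT(S). -/
/-- The DNA alphabet. -/
inductive DNA : Type
  | A | T | G | C
  deriving DecidableEq, Repr

/-- Complement of a DNA base: a↔t, g↔c. -/
def DNA.compl : DNA → DNA
  | .A => .T
  | .T => .A
  | .G => .C
  | .C => .G

/-- Strings over the DNA alphabet. -/
abbrev Str : Type := List DNA

/-- Reverse complement of a string. -/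
def rc (s : Str) : Str := (s.map DNA.compl).reverse

/-- An approximate solution for the SCS-RC instance `S`: a string containing,
for each `s ∈ S`, either `s` or its reverse complement as a substring. -/
def ApproxSol (S : Finset Str) (u : Str) : Prop :=
  ∀ s ∈ S, s <:+: u ∨ rc s <:+: u

/-- `OPT S` is the minimum length of an approximate solution for the SCS-RC instance `S`. -/
noncomputable def OPT (S : Finset Str) : ℕ :=
  sInf {n | ∃ u : Str, ApproxSol S u ∧ u.length = n}

/-- `S` is substring-free: no string of `S ∪ S̄^R` is a substring of another. -/
def SubstrFree (S : Finset Str) : Prop :=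
  ∀ x, (x ∈ S ∨ rc x ∈ S) → ∀ y, (y ∈ S ∨ rc y ∈ S) → x ≠ y → ¬ x <:+: y

/-- `ov x y`: the length of the longest string `v` such that `x = u ++ v` and
`y = v ++ w` for nonempty `u`, `w`. -/
noncomputable def ov (x y : Str) : ℕ :=
  sSup {k | ∃ v : Str, v.length = k ∧ (∃ u : Str, u ≠ [] ∧ x = u ++ v) ∧
        (∃ w : Str, w ≠ [] ∧ y = v ++ w)}

/-- `prefStr x y = pref(x, y)`: the prefix of `x` with respect to `y`. -/
noncomputable def prefStr (x y : Str) : Str := x.take (x.length - ov x y)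

/-- `distStr x y = dist(x, y) = |x| - ov(x, y)`. -/
noncomputable def distStr (x y : Str) : ℕ := x.length - ov x y

/-- The merge `⟨x, y⟩ = pref(x, y) ++ y`. -/
noncomputable def mergeStr (x y : Str) : Str := prefStr x y ++ y

/-- `superstr [x1, …, xr] = ⟨x1, …, xr⟩ = pref(x1,x2) ⋯ pref(x_{r-1},x_r) ++ x_r`. -/
noncomputable def superstr : List Str → Str
  | [] => []
  | [x] => x
  | x :: y :: rest => prefStr x y ++ superstr (y :: rest)

/-- `‖S‖`: the total length of the strings of the finite set `S`. -/
def normS (S : Finset Str) : ℕ := ∑ s ∈ S, s.length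

/-- Pairs `(x, y)` of strings from the collection `S` or their reverse complements,
with `x = y`, or with `x ≠ y` and `rc x ≠ y`, as considered by MGREEDY-RC. -/
def ValidPair (S : Finset Str) (x y : Str) : Prop :=
  (x ∈ S ∨ rc x ∈ S) ∧ (y ∈ S ∨ rc y ∈ S) ∧ (x = y ∨ (x ≠ y ∧ rc x ≠ y))

/-- `MGreedyExec S T`: some execution of MGREEDY-RC starting from the collection `S`
(under some tie-breaking among pairs of maximum overlap) produces the set `T`. -/
inductive MGreedyExec : Finset Str → Finset Str → Prop
  | done : MGreedyExec ∅ ∅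
  | close (S T : Finset Str) (x : Str)
      (hx : x ∈ S ∨ rc x ∈ S)
      (hmax : ∀ a b, ValidPair S a b → ov a b ≤ ov x x)
      (h : MGreedyExec (S \ {x, rc x}) T) :
      MGreedyExec S (insert x T)
  | merge (S T : Finset Str) (x y : Str)
      (hx : x ∈ S ∨ rc x ∈ S) (hy : y ∈ S ∨ rc y ∈ S)
      (hne : x ≠ y) (hrc : rc x ≠ y)
      (hmax : ∀ a b, ValidPair S a b → ov a b ≤ ov x y)
      (h : MGreedyExec (insert (mergeStr x y) (S \ {x, rc x, y, rc y})) T) :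
      MGreedyExec S T

/-- `GreedyExec S u`: some execution of GREEDY-RC starting from the collection `S`
(under some tie-breaking among pairs of maximum overlap) outputs the string `u`. -/
inductive GreedyExec : Finset Str → Str → Prop
  | single (x : Str) : GreedyExec {x} x
  | merge (S : Finset Str) (u x y : Str)
      (hx : x ∈ S ∨ rc x ∈ S) (hy : y ∈ S ∨ rc y ∈ S)
      (hne : x ≠ y) (hrc : rc x ≠ y)
      (hmax : ∀ a b, (a ∈ S ∨ rc a ∈ S) → (b ∈ S ∨ rc b ∈ S) → a ≠ b → rc a ≠ b →
        ov a b ≤ ov x y)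
      (hcard : 1 < S.card)
      (h : GreedyExec (insert (mergeStr x y) (S \ {x, rc x, y, rc y})) u) :
      GreedyExec S u

/-- Reverse complement of a path: the path of the reverse complements, reversed. -/
def rcPath (p : List Str) : List Str := (p.map rc).reverse

/-- Valid pairs for the path-level description of MGREEDY-RC, where each collection
element is the path of original strings composing it, its string value being `superstr`. -/
def ValidPairP (P : Finset (List Str)) (p q : List Str) : Prop :=
  (p ∈ P ∨ rcPath p ∈ P) ∧ (q ∈ P ∨ rcPath q ∈ P) ∧
  (superstr p = superstr q ∨ (superstr p ≠ superstr q ∧ rc (superstr p) ≠ superstr q))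

/-- `MGreedyCyc P C`: the path-level description of an execution of MGREEDY-RC.
Starting from the collection of paths `P`, merging the paths `p` and `q` (adding the
edge from the last vertex of `p` to the first of `q`) when the corresponding strings
are merged, and closing the path `p` into the cycle `p` (with the edge from its last
vertex to its first) when the corresponding string is moved to `T`, some execution
produces the set of closed cycles `C`. -/
inductive MGreedyCyc : Finset (List Str) → Finset (List Str) → Prop
  | done : MGreedyCyc ∅ ∅
  | close (P C : Finset (List Str)) (p : List Str)
      (hp : p ∈ P ∨ rcPath p ∈ P)
      (hmax : ∀ q₁ q₂, ValidPairP P q₁ q₂ →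
        ov (superstr q₁) (superstr q₂) ≤ ov (superstr p) (superstr p))
      (h : MGreedyCyc (P \ {p, rcPath p}) C) :
      MGreedyCyc P (insert p C)
  | merge (P C : Finset (List Str)) (p q : List Str)
      (hp : p ∈ P ∨ rcPath p ∈ P) (hq : q ∈ P ∨ rcPath q ∈ P)
      (hne : superstr p ≠ superstr q) (hrc : rc (superstr p) ≠ superstr q)
      (hmax : ∀ q₁ q₂, ValidPairP P q₁ q₂ →
        ov (superstr q₁) (superstr q₂) ≤ ov (superstr p) (superstr q))
      (h : MGreedyCyc (insert (p ++ q) (P \ {p, rcPath p, q, rcPath q})) C) :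
      MGreedyCyc P C

/-- The weight of the cycle `x1, …, xr, x1` given by the list `[x1, …, xr]`:
`Σ_{i=1}^{r} dist(x_i, x_{i+1})` with indices modulo `r`. -/
noncomputable def cycleWeight (c : List Str) : ℕ :=
  ((c.zip (c.rotate 1)).map fun p => distStr p.1 p.2).sum

/-- `C` is a cycle cover of the distance graph `G_S`: a set of vertex-disjoint cycles
on vertices of `S ∪ S̄^R` such that for each `s ∈ S` exactly one of `s` and `rc s`
is contained in the cycles. -/
def IsCycleCover (S : Finset Str) (C : Finset (List Str)) : Prop :=
  (∀ c ∈ C, c ≠ []) ∧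
  (∀ c ∈ C, c.Nodup) ∧
  (∀ c ∈ C, ∀ d ∈ C, c ≠ d → ∀ x ∈ c, x ∉ d) ∧
  (∀ c ∈ C, ∀ x ∈ c, x ∈ S ∨ rc x ∈ S) ∧
  (∀ s ∈ S, Xor' (∃ c ∈ C, s ∈ c) (∃ c ∈ C, rc s ∈ c))

/-- The total weight of a cycle cover. -/
noncomputable def coverWeight (C : Finset (List Str)) : ℕ := ∑ c ∈ C, cycleWeight c

/-- `minCoverWeight S = w(CYC(G_S))`: the minimum total weight of a cycle cover of `G_S`. -/
noncomputable def minCoverWeight (S : Finset Str) : ℕ :=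
  sInf {n | ∃ C : Finset (List Str), IsCycleCover S C ∧ coverWeight C = n}

/-- `x` is a factor of `s`: `s = x^i ++ y` for some `i ≥ 1` and some prefix `y` of `x`. -/
def IsFactor (x s : Str) : Prop :=
  x ≠ [] ∧ ∃ i : ℕ, 1 ≤ i ∧ ∃ y : Str, y <+: x ∧ s = (List.replicate i x).flatten ++ y

/-- `period s`: the length of the shortest factor of `s`. -/
noncomputable def periodStr (s : Str) : ℕ :=
  sInf {k | ∃ x : Str, IsFactor x s ∧ x.length = k}

open Classical in
/-- `factorStr s`: a shortest factor of `s`. -/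
noncomputable def factorStr (s : Str) : Str :=
  if h : ∃ x : Str, IsFactor x s ∧ x.length = periodStr s then h.choose else []

/-- Two strings are equivalent if the factor of one is a cyclic shift of the factor
of the other. -/
def EquivStr (x y : Str) : Prop :=
  ∃ e f : Str, factorStr x = e ++ f ∧ factorStr y = f ++ e

/-! ### Auxiliary development for Statement 4 -/

section Aux4

lemma compl_compl' (d : DNA) : d.compl.compl = d := by cases d <;> rfl

lemma rc_rc (s : Str) : rc (rc s) = s := by
  have h : DNA.compl ∘ DNA.compl = id := funext compl_compl'
  simp [rc, List.map_map, h]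

/-- Encoding of DNA strings into naturals (base 5, digits 1..4). -/
def dnaIdx : DNA → ℕ
  | .A => 0 | .T => 1 | .G => 2 | .C => 3

def enc : Str → ℕ
  | [] => 0
  | d :: l => 5 * enc l + dnaIdx d + 1

lemma dnaIdx_lt (d : DNA) : dnaIdx d < 4 := by cases d <;> decide

lemma dnaIdx_inj (d e : DNA) (h : dnaIdx d = dnaIdx e) : d = e := by
  revert h; cases d <;> cases e <;> decide

lemma enc_inj : ∀ s t : Str, enc s = enc t → s = t := by
  intro s
  induction s with
  | nil =>
    intro t h
    cases t with
    | nil => rfl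
    | cons d l => simp [enc] at h
  | cons d l ih =>
    intro t h
    cases t with
    | nil => simp [enc] at h
    | cons e m =>
      simp only [enc] at h
      have hd := dnaIdx_lt d
      have he := dnaIdx_lt e
      have h1 : enc l = enc m ∧ dnaIdx d = dnaIdx e := by omega
      have hde : d = e := dnaIdx_inj d e h1.2
      rw [hde, ih m h1.1]

-- Pick the canonical representative of {t, rc t} occurring in u.
open Classical in
noncomputable def pick (u t : Str) : Str :=
  if (rc t <:+: u) ∧ (¬ t <:+: u ∨ enc (rc t) < enc t) then rc t else t

lemma pick_mem (u t : Str) : pick u t = t ∨ pick u t = rc t := by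
  unfold pick
  split
  · exact Or.inr rfl
  · exact Or.inl rfl

lemma pick_infix (u t : Str) (h : t <:+: u ∨ rc t <:+: u) : pick u t <:+: u := by
  unfold pick
  split_ifs with h'
  · exact h'.1
  · push_neg at h'
    rcases h with h | h
    · exact h
    · exact (h' h).1

lemma pick_rc (u t : Str) (h : t <:+: u ∨ rc t <:+: u) : pick u (rc t) = pick u t := by
  unfold pick
  rw [rc_rc]
  by_cases h1 : t <:+: u <;> by_cases h2 : rc t <:+: u
  · rcases lt_trichotomy (enc t) (enc (rc t)) with hl | heq | hg
    · rw [if_pos ⟨h1, Or.inr hl⟩, if_neg]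
      rintro ⟨-, h3 | h3⟩
      · exact h3 h1
      · omega
    · have heq2 : rc t = t := (enc_inj _ _ heq).symm
      simp [heq2]
    · rw [if_neg, if_pos ⟨h2, Or.inr hg⟩]
      rintro ⟨-, h3 | h3⟩
      · exact h3 h2
      · omega
  · rw [if_pos ⟨h1, Or.inl h2⟩, if_neg (fun hc => h2 hc.1)]
  · rw [if_neg (fun hc => h1 hc.1), if_pos ⟨h2, Or.inl h1⟩]
  · rcases h with h | h
    · exact absurd h h1
    · exact absurd h h2

/-- `x` occurs somewhere in `u`. -/
def OccEx (u x : Str) : Prop := ∃ l, x <+: u.drop l ∧ l + x.length ≤ u.length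

lemma occ_of_infix (u x : Str) (h : x <:+: u) : OccEx u x := by
  obtain ⟨a, b, rfl⟩ := h
  refine ⟨a.length, ⟨b, ?_⟩, ?_⟩
  · rw [List.append_assoc, List.drop_left]
  · simp [List.length_append]

-- The position of a fixed occurrence of `x` in `u`.
open Classical in
noncomputable def posIn (u x : Str) : ℕ :=
  if h : OccEx u x then h.choose else 0

lemma posIn_spec (u x : Str) (h : OccEx u x) :
    x <+: u.drop (posIn u x) ∧ posIn u x + x.length ≤ u.length := by
  rw [posIn, dif_pos h]
  exact h.choose_spec

lemma posIn_rep (u x : Str) (h : OccEx u x) :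
    x = (u.drop (posIn u x)).take x.length := by
  obtain ⟨t, ht⟩ := (posIn_spec u x h).1
  rw [← ht, List.take_left]

lemma seg (u x : Str) (p m k : ℕ) (hx : x = (u.drop p).take x.length)
    (hmk : m + k ≤ x.length) :
    (x.drop m).take k = (u.drop (p + m)).take k := by
  conv_lhs => rw [hx]
  rw [List.drop_take, List.take_take, List.drop_drop, min_eq_left (by omega)]

lemma posIn_ne (u x y : Str) (hx : OccEx u x) (hy : OccEx u y) (hxy : x ≠ y)
    (h1 : ¬ x <:+: y) (h2 : ¬ y <:+: x) : posIn u x ≠ posIn u y := by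
  intro he
  have sx := (posIn_spec u x hx).1
  have sy := (posIn_spec u y hy).1
  rw [he] at sx
  rcases List.prefix_or_prefix_of_prefix sx sy with h | h
  · exact h1 h.isInfix
  · exact h2 h.isInfix

lemma infix_of_contained (u x y : Str) (hx : OccEx u x) (hy : OccEx u y)
    (hle : posIn u x ≤ posIn u y) (hend : posIn u y + y.length ≤ posIn u x + x.length) :
    y <:+: x := by
  set px := posIn u x with hpx
  set py := posIn u y with hpy
  have hxe := posIn_rep u x hx
  have hye := posIn_rep u y hy
  have h1 : (x.drop (py - px)).take y.length = (u.drop (px + (py - px))).take y.length :=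
    seg u x px (py - px) y.length hxe (by omega)
  rw [show px + (py - px) = py from by omega] at h1
  have h2 : (x.drop (py - px)).take y.length = y := by
    rw [h1]
    conv_rhs => rw [hye]
  have h3 : y <+: x.drop (py - px) := by
    rw [← h2]; exact List.take_prefix _ _
  exact h3.isInfix.trans (List.drop_suffix _ x).isInfix

lemma dist_le_gap (u x y : Str) (hx : OccEx u x) (hy : OccEx u y)
    (h2 : ¬ y <:+: x) (hlt : posIn u x < posIn u y) :
    distStr x y + posIn u x ≤ posIn u y := by
  set px := posIn u x with hpx
  set py := posIn u y with hpy
  have hxe := posIn_rep u x hx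
  have hye := posIn_rep u y hy
  have hend : px + x.length < py + y.length := by
    by_contra hc
    push_neg at hc
    exact h2 (infix_of_contained u x y hx hy (le_of_lt hlt) hc)
  by_cases hov : px + x.length ≤ py
  · have : distStr x y ≤ x.length := Nat.sub_le _ _
    omega
  · push_neg at hov
    set k := px + x.length - py with hk
    have hk1 : 1 ≤ k := by omega
    have hk2 : k < x.length := by omega
    have hk3 : k < y.length := by omega
    have hveq : x.drop (x.length - k) = (u.drop py).take k := by
      have ha : (x.drop (x.length - k)).take k = (u.drop (px + (x.length - k))).take k :=
        seg u x px (x.length - k) k hxe (by omega)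
      have hb : (x.drop (x.length - k)).take k = x.drop (x.length - k) :=
        List.take_of_length_le (by rw [List.length_drop]; omega)
      rw [← hb, ha, show px + (x.length - k) = py from by omega]
    have hyk : y.take k = (u.drop py).take k := by
      have := seg u y py 0 k hye (by omega)
      simpa using this
    have hbdd : BddAbove {n | ∃ v : Str, v.length = n ∧
        (∃ w : Str, w ≠ [] ∧ x = w ++ v) ∧ (∃ w : Str, w ≠ [] ∧ y = v ++ w)} := by
      refine ⟨x.length, ?_⟩
      rintro n ⟨v, hv, ⟨w, -, hxv⟩, -⟩
      have : x.length = w.length + v.length := by rw [hxv]; simp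
      omega
    have hmem : k ∈ {n | ∃ v : Str, v.length = n ∧
        (∃ w : Str, w ≠ [] ∧ x = w ++ v) ∧ (∃ w : Str, w ≠ [] ∧ y = v ++ w)} := by
      refine ⟨x.drop (x.length - k), by rw [List.length_drop]; omega, ⟨x.take (x.length - k), ?_, (List.take_append_drop _ x).symm⟩, ⟨y.drop k, ?_, ?_⟩⟩
      · apply List.ne_nil_of_length_pos
        rw [List.length_take]
        omega
      · apply List.ne_nil_of_length_pos
        rw [List.length_drop]
        omega
      · rw [hveq, ← hyk]
        exact (List.take_append_drop k y).symm
    have hle : k ≤ ov x y := le_csSup hbdd hmem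
    have hd : distStr x y = x.length - ov x y := rfl
    omega

/-- Path weight: sum of distances along consecutive pairs. -/
noncomputable def pw : List Str → ℕ
  | [] => 0
  | [_] => 0
  | x :: y :: rest => distStr x y + pw (y :: rest)

lemma zipsum (w : Str) : ∀ (cs : List Str) (x z : Str), (x :: cs).getLast? = some z →
    (((x :: cs).zip (cs ++ [w])).map fun p => distStr p.1 p.2).sum
      = pw (x :: cs) + distStr z w := by
  intro cs
  induction cs with
  | nil =>
    intro x z h
    simp only [List.getLast?_singleton, Option.some.injEq] at h
    subst h
    simp [pw]
  | cons b l ih =>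
    intro x z h
    rw [List.getLast?_cons_cons] at h
    have hzip : (x :: b :: l).zip ((b :: l) ++ [w]) = (x, b) :: ((b :: l).zip (l ++ [w])) := by
      rw [List.cons_append]
      rfl
    rw [hzip, List.map_cons, List.sum_cons, ih b z h]
    have hpw : pw (x :: b :: l) = distStr x b + pw (b :: l) := rfl
    have hfix : (fun p => distStr p.1 p.2) ((x, b) : Str × Str) = distStr x b := rfl
    simp only [hfix]
    omega

lemma cycleWeight_eq (cs : List Str) (x z : Str) (h : (x :: cs).getLast? = some z) :
    cycleWeight (x :: cs) = pw (x :: cs) + distStr z x := by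
  unfold cycleWeight
  rw [show (x :: cs).rotate 1 = cs ++ [x] from by rw [List.rotate_cons_succ, List.rotate_zero]]
  exact zipsum x cs x z h

lemma mem_of_getLast?' {l : List Str} {a : Str} (h : l.getLast? = some a) : a ∈ l := by
  obtain ⟨h', h''⟩ := List.mem_getLast?_eq_getLast (Option.mem_def.mpr h)
  rw [h'']
  exact List.getLast_mem h'

lemma exists_chain (u : Str) :
    ∀ P : Finset Str, (∀ x ∈ P, OccEx u x) →
    (∀ x ∈ P, ∀ y ∈ P, x ≠ y → ¬ x <:+: y) → P.Nonempty →
    ∃ x cs z, (x :: cs).Nodup ∧ (∀ w, w ∈ x :: cs ↔ w ∈ P) ∧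
      (x :: cs).getLast? = some z ∧ pw (x :: cs) + posIn u x ≤ posIn u z := by
  intro P
  induction P using Finset.strongInduction with
  | _ P ih =>
    intro hocc hinf hne
    obtain ⟨x₀, hx₀, hmin⟩ := P.exists_min_image (posIn u) hne
    by_cases hP : P.erase x₀ = ∅
    · have hPs : ∀ w, w ∈ P ↔ w = x₀ := by
        intro w
        constructor
        · intro hw
          by_contra hne'
          exact absurd (Finset.mem_erase.mpr ⟨hne', hw⟩) (by simp [hP])
        · rintro rfl; exact hx₀
      exact ⟨x₀, [], x₀, by simp, by simpa using fun w => (hPs w).symm, by simp,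
        by simp [pw]⟩
    · have hne' : (P.erase x₀).Nonempty := Finset.nonempty_of_ne_empty hP
      obtain ⟨y, cs, z, hnd, hmem, hlast, hpw⟩ :=
        ih (P.erase x₀) (Finset.erase_ssubset hx₀)
          (fun a ha => hocc a (Finset.mem_of_mem_erase ha))
          (fun a ha b hb => hinf a (Finset.mem_of_mem_erase ha) b (Finset.mem_of_mem_erase hb))
          hne'
      have hyP' : y ∈ P.erase x₀ := (hmem y).mp (List.mem_cons_self (a := y) (l := cs))
      have hyP : y ∈ P := Finset.mem_of_mem_erase hyP'
      have hxy : x₀ ≠ y := by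
        rintro rfl
        exact (Finset.notMem_erase x₀ P) hyP'
      have hlt : posIn u x₀ < posIn u y :=
        lt_of_le_of_ne (hmin y hyP)
          (posIn_ne u x₀ y (hocc _ hx₀) (hocc _ hyP) hxy
            (hinf _ hx₀ _ hyP hxy) (hinf _ hyP _ hx₀ hxy.symm))
      have hgap : distStr x₀ y + posIn u x₀ ≤ posIn u y :=
        dist_le_gap u x₀ y (hocc _ hx₀) (hocc _ hyP) (hinf _ hyP _ hx₀ hxy.symm) hlt
      refine ⟨x₀, y :: cs, z, ?_, ?_, ?_, ?_⟩
      · refine List.nodup_cons.mpr ⟨fun hx => ?_, hnd⟩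
        exact (Finset.notMem_erase x₀ P) ((hmem x₀).mp hx)
      · intro w
        rw [List.mem_cons, hmem w, Finset.mem_erase]
        constructor
        · rintro (rfl | ⟨-, hw⟩)
          · exact hx₀
          · exact hw
        · intro hw
          by_cases hwx : w = x₀
          · exact Or.inl hwx
          · exact Or.inr ⟨hwx, hw⟩
      · rw [List.getLast?_cons_cons]
        exact hlast
      · have heq : pw (x₀ :: y :: cs) = distStr x₀ y + pw (y :: cs) := rfl
        omega

lemma infix_flatten : ∀ (L : List Str) (s : Str), s ∈ L → s <:+: L.flatten := by
  intro L
  induction L with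
  | nil => simp
  | cons a L ih =>
    intro s hs
    rw [List.flatten_cons]
    rcases List.mem_cons.mp hs with rfl | hs
    · exact ⟨[], L.flatten, by simp⟩
    · exact (ih s hs).trans (List.suffix_append a L.flatten).isInfix

end Aux4

/-- the minimum total weight of a cycle cover of the distance graph
`G_S` is at most `OPT(S)`. -/
theorem cycle_cover_weight_le_opt (S : Finset Str) (hS : SubstrFree S) :
    minCoverWeight S ≤ OPT S := by
  classical
  have hne : {n | ∃ u : Str, ApproxSol S u ∧ u.length = n}.Nonempty :=
    ⟨(S.toList.flatten).length, S.toList.flatten,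
      fun s hs => Or.inl (infix_flatten S.toList s (Finset.mem_toList.mpr hs)), rfl⟩
  obtain ⟨u, hu, hulen⟩ : ∃ u : Str, ApproxSol S u ∧ u.length = OPT S := Nat.sInf_mem hne
  by_cases hpal : ∃ s ∈ S, rc s = s
  · obtain ⟨s, hs, hrcs⟩ := hpal
    have hempty : {n | ∃ C : Finset (List Str), IsCycleCover S C ∧ coverWeight C = n} = ∅ := by
      ext n
      simp only [Set.mem_setOf_eq, Set.mem_empty_iff_false, iff_false]
      rintro ⟨C, hC, -⟩
      have hx := hC.2.2.2.2 s hs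
      rw [hrcs] at hx
      rcases hx with ⟨h1, h2⟩ | ⟨h1, h2⟩ <;> exact h2 h1
    have hz : minCoverWeight S = 0 := by
      rw [minCoverWeight, hempty, Nat.sInf_empty]
    omega
  push_neg at hpal
  by_cases hSe : S = ∅
  · subst hSe
    have h0 : (0 : ℕ) ∈ {n | ∃ C : Finset (List Str),
        IsCycleCover (∅ : Finset Str) C ∧ coverWeight C = n} :=
      ⟨∅, ⟨by simp, by simp, by simp, by simp, by simp⟩, by simp [coverWeight]⟩
    exact le_trans (Nat.sInf_le h0) (Nat.zero_le _)
  · have hSne : S.Nonempty := Finset.nonempty_of_ne_empty hSe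
    set R := S.image (pick u) with hR
    have hRS : ∀ x ∈ R, x ∈ S ∨ rc x ∈ S := by
      intro x hx
      obtain ⟨s, hs, rfl⟩ := Finset.mem_image.mp hx
      rcases pick_mem u s with h | h
      · rw [h]; exact Or.inl hs
      · rw [h, rc_rc]; exact Or.inr hs
    have hRocc : ∀ x ∈ R, OccEx u x := by
      intro x hx
      obtain ⟨s, hs, rfl⟩ := Finset.mem_image.mp hx
      exact occ_of_infix u _ (pick_infix u s (hu s hs))
    have hRinf : ∀ x ∈ R, ∀ y ∈ R, x ≠ y → ¬ x <:+: y :=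
      fun x hx y hy hxy => hS x (hRS x hx) y (hRS y hy) hxy
    have hRne : R.Nonempty := hSne.image _
    obtain ⟨x, cs, z, hnd, hmem, hlast, hpwb⟩ := exists_chain u R hRocc hRinf hRne
    have hzR : z ∈ R := (hmem z).mp (mem_of_getLast?' hlast)
    have hcw : cycleWeight (x :: cs) = pw (x :: cs) + distStr z x := cycleWeight_eq cs x z hlast
    have hzspec := (posIn_spec u z (hRocc z hzR)).2
    have hbound : cycleWeight (x :: cs) ≤ u.length := by
      have h1 : distStr z x ≤ z.length := Nat.sub_le _ _
      omega
    have hxor : ∀ s ∈ S, Xor' (s ∈ R) (rc s ∈ R) := by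
      intro s hs
      have hs' : s <:+: u ∨ rc s <:+: u := hu s hs
      have hsrc : rc s ≠ s := hpal s hs
      rcases pick_mem u s with hp | hp
      · left
        constructor
        · exact Finset.mem_image.mpr ⟨s, hs, hp⟩
        · intro hcon
          obtain ⟨t, ht, hteq⟩ := Finset.mem_image.mp hcon
          rcases pick_mem u t with h' | h'
          · have htv : t = rc s := by rw [← h', hteq]
            have hpr : pick u (rc s) = pick u s := pick_rc u s hs'
            rw [htv, hpr, hp] at hteq
            exact hsrc hteq.symm
          · have htv : rc t = rc s := by rw [← h', hteq]
            have hts : t = s := by rw [← rc_rc t, htv, rc_rc]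
            rw [hts, hp] at hteq
            exact hsrc hteq.symm
      · right
        constructor
        · exact Finset.mem_image.mpr ⟨s, hs, hp⟩
        · intro hcon
          obtain ⟨t, ht, hteq⟩ := Finset.mem_image.mp hcon
          rcases pick_mem u t with h' | h'
          · have hts : t = s := by rw [← h', hteq]
            rw [hts, hp] at hteq
            exact hsrc hteq
          · have htv : rc t = s := by rw [← h', hteq]
            have hts : t = rc s := by rw [← rc_rc t, htv]
            have hpr : pick u (rc s) = pick u s := pick_rc u s hs'
            rw [hts, hpr, hp] at hteq
            exact hsrc hteq
    have hcc : IsCycleCover S {x :: cs} := by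
      refine ⟨?_, ?_, ?_, ?_, ?_⟩
      · intro c hc
        rw [Finset.mem_singleton] at hc
        subst hc
        exact List.cons_ne_nil _ _
      · intro c hc
        rw [Finset.mem_singleton] at hc
        subst hc
        exact hnd
      · intro c1 h1 c2 h2 hne12
        rw [Finset.mem_singleton] at h1 h2
        exact absurd (h1.trans h2.symm) hne12
      · intro c hc w hw
        rw [Finset.mem_singleton] at hc
        subst hc
        exact hRS w ((hmem w).mp hw)
      · intro s hs
        have e1 : (∃ c ∈ ({x :: cs} : Finset (List Str)), s ∈ c) ↔ s ∈ R := by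
          constructor
          · rintro ⟨c, hc, hsc⟩
            rw [Finset.mem_singleton] at hc
            subst hc
            exact (hmem s).mp hsc
          · intro h
            exact ⟨x :: cs, Finset.mem_singleton_self _, (hmem s).mpr h⟩
        have e2 : (∃ c ∈ ({x :: cs} : Finset (List Str)), rc s ∈ c) ↔ rc s ∈ R := by
          constructor
          · rintro ⟨c, hc, hsc⟩
            rw [Finset.mem_singleton] at hc
            subst hc
            exact (hmem _).mp hsc
          · intro h
            exact ⟨x :: cs, Finset.mem_singleton_self _, (hmem _).mpr h⟩
        rcases hxor s hs with ⟨h1, h2⟩ | ⟨h1, h2⟩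
        · exact Or.inl ⟨e1.mpr h1, fun hc => h2 (e2.mp hc)⟩
        · exact Or.inr ⟨e2.mpr h1, fun hc => h2 (e1.mp hc)⟩
    have hmemset : coverWeight {x :: cs} ∈ {n | ∃ C : Finset (List Str),
        IsCycleCover S C ∧ coverWeight C = n} := ⟨{x :: cs}, hcc, rfl⟩
    calc minCoverWeight S ≤ coverWeight {x :: cs} := Nat.sInf_le hmemset
      _ = cycleWeight (x :: cs) := by simp [coverWeight]
      _ ≤ u.length := hbound
      _ = OPT S := hulen
end

section
/- Let S be a substring-free set of strings over the DNA alphabet and let CYC(G_S) be an optimal cycle cover of the distance graph G_S whose cycles are C = s'_{i1},…,s'_{ir},s'_{i1}. Let T be the set consisting of the string ⟨s'_{i1},…,s'_{ir}⟩ for each cycle C of CYC(G_S). Then OPT(T) ≤ OPT(S) + w(CYC(G_S)) ≤ 2·OPT(S). -/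
lemma DNA.compl_compl (a : DNA) : a.compl.compl = a := by cases a <;> rfl

lemma length_rc (s : Str) : (rc s).length = s.length := by simp [rc]

lemma rc_append (a b : Str) : rc (a ++ b) = rc b ++ rc a := by simp [rc]

lemma rc_eq_nil {s : Str} : rc s = [] ↔ s = [] := by
  constructor
  · intro h; have := congrArg List.length h; simpa [length_rc] using this
  · rintro rfl; rfl

lemma rc_inj {x y : Str} (h : rc x = rc y) : x = y := by
  have := congrArg rc h; simpa [rc_rc] using this

lemma rc_infix {x y : Str} (h : x <:+: y) : rc x <:+: rc y := by
  obtain ⟨a, b, rfl⟩ := h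
  rw [rc_append, rc_append]
  exact ⟨rc b, rc a, by simp⟩

lemma mem_or_rc_symm {S : Finset Str} {x : Str} (h : x ∈ S ∨ rc x ∈ S) :
    rc x ∈ S ∨ rc (rc x) ∈ S := by rw [rc_rc]; tauto

def ovSet (x y : Str) : Set ℕ :=
  {k | ∃ v : Str, v.length = k ∧ (∃ u : Str, u ≠ [] ∧ x = u ++ v) ∧
        (∃ w : Str, w ≠ [] ∧ y = v ++ w)}

lemma ov_eq_sSup (x y : Str) : ov x y = sSup (ovSet x y) := rfl

lemma ovSet_bddAbove (x y : Str) : BddAbove (ovSet x y) := by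
  refine ⟨x.length, ?_⟩
  rintro k ⟨v, rfl, ⟨u, hu, rfl⟩, -⟩
  simp

lemma ovSet_nonempty {x y : Str} (hx : x ≠ []) (hy : y ≠ []) : (ovSet x y).Nonempty :=
  ⟨0, [], rfl, ⟨x, hx, by simp⟩, ⟨y, hy, by simp⟩⟩

lemma le_ov {x y : Str} {k : ℕ} (h : k ∈ ovSet x y) : k ≤ ov x y :=
  le_csSup (ovSet_bddAbove x y) h

lemma ov_mem {x y : Str} (hx : x ≠ []) (hy : y ≠ []) : ov x y ∈ ovSet x y :=
  Nat.sSup_mem (ovSet_nonempty hx hy) (ovSet_bddAbove x y)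

lemma ov_le_length (x y : Str) : ov x y ≤ x.length := by
  rcases Set.eq_empty_or_nonempty (ovSet x y) with h | h
  · rw [ov_eq_sSup, h]; simp
  · exact csSup_le h (by rintro k ⟨v, rfl, ⟨u, hu, rfl⟩, -⟩; simp)

lemma length_prefStr (x y : Str) : (prefStr x y).length = distStr x y := by
  simp [prefStr, distStr]

lemma distStr_le (x y : Str) : distStr x y ≤ x.length := Nat.sub_le _ _

lemma mergeStr_eq {x y : Str} (hx : x ≠ []) (hy : y ≠ []) :
    ∃ w : Str, w ≠ [] ∧ mergeStr x y = x ++ w := by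
  obtain ⟨v, hvl, ⟨u, hu, hxe⟩, ⟨w, hw, hye⟩⟩ := ov_mem hx hy
  refine ⟨w, hw, ?_⟩
  have hxl : x.length = u.length + v.length := by rw [hxe]; simp
  have hlen : x.length - ov x y = u.length := by omega
  rw [mergeStr, prefStr, hlen]
  conv_lhs => rw [hxe]
  rw [List.take_left, hxe, hye]
  simp

noncomputable def pathW : List Str → ℕ
  | [] => 0
  | [_] => 0
  | x :: y :: r => distStr x y + pathW (y :: r)

lemma superstr_cons_cons (x y : Str) (r : List Str) :
    superstr (x :: y :: r) = prefStr x y ++ superstr (y :: r) := rfl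

lemma head_prefix_superstr : ∀ (l : List Str) (x : Str), (∀ z ∈ x :: l, z ≠ []) →
    x <+: superstr (x :: l)
  | [], x, _ => by simp [superstr]
  | y :: r, x, h => by
    have hx : x ≠ [] := h x (by simp)
    have hy : y ≠ [] := h y (by simp)
    obtain ⟨t, ht⟩ := head_prefix_superstr r y (fun z hz => h z (by simp at hz ⊢; tauto))
    obtain ⟨w, hw, hmw⟩ := mergeStr_eq hx hy
    rw [superstr_cons_cons, ← ht, ← List.append_assoc]
    have : prefStr x y ++ y = mergeStr x y := rfl
    rw [this, hmw, List.append_assoc]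
    exact ⟨w ++ t, rfl⟩

lemma superstr_append_last : ∀ (l : List Str) (x : Str),
    ∃ t, superstr (l ++ [x]) = t ++ x ∧ t.length = pathW (l ++ [x])
  | [], x => ⟨[], by simp [superstr, pathW]⟩
  | [y], x => by
    refine ⟨prefStr y x, rfl, ?_⟩
    simp [pathW, length_prefStr]
  | y :: z :: r, x => by
    obtain ⟨t, ht, htl⟩ := superstr_append_last (z :: r) x
    refine ⟨prefStr y z ++ t, ?_, ?_⟩
    · show prefStr y z ++ superstr ((z :: r) ++ [x]) = prefStr y z ++ t ++ x
      rw [ht, List.append_assoc]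
    · show _ = pathW (y :: z :: (r ++ [x]))
      simp only [List.cons_append] at htl ⊢
      simp only [pathW, length_prefStr, List.length_append, htl]

lemma superstr_prefix_append : ∀ (l : List Str) (x : Str), l ≠ [] →
    (∀ z ∈ l ++ [x], z ≠ []) → superstr l <+: superstr (l ++ [x])
  | [], _, h, _ => absurd rfl h
  | [y], x, _, h => by
    have hy : y ≠ [] := h y (by simp)
    have hx : x ≠ [] := h x (by simp)
    obtain ⟨w, hw, hmw⟩ := mergeStr_eq hy hx
    show superstr [y] <+: superstr [y, x]
    have : superstr [y, x] = mergeStr y x := rfl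
    rw [this, hmw]
    exact ⟨w, rfl⟩
  | y :: z :: r, x, _, h => by
    have ih := superstr_prefix_append (z :: r) x (by simp)
      (fun w hw => h w (by simp at hw ⊢; tauto))
    rw [superstr_cons_cons]
    show _ <+: superstr (y :: z :: (r ++ [x]))
    rw [superstr_cons_cons]
    obtain ⟨t, ht⟩ := ih
    exact ⟨t, by rw [List.append_assoc, ht]; rfl⟩

lemma pathW_zip : ∀ l : List Str, pathW l = ((l.zip l.tail).map fun p => distStr p.1 p.2).sum
  | [] => rfl
  | [_] => rfl
  | x :: y :: r => by
    have := pathW_zip (y :: r)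
    simp only [pathW, this, List.zip_cons_cons, List.tail_cons, List.map_cons, List.sum_cons]

lemma cycleWeight_eq_pathW : ∀ (c : List Str), c ≠ [] → cycleWeight c = pathW (c ++ [c.headI])
  | [], h => absurd rfl h
  | x :: xs, _ => by
    show cycleWeight (x :: xs) = pathW ((x :: xs) ++ [x])
    rw [pathW_zip, cycleWeight]
    congr 1
    have hrot : (x :: xs).rotate 1 = xs ++ [x] := by
      rw [List.rotate_eq_drop_append_take (by simp)]
      simp
    rw [hrot]
    have h3 : ((x :: xs) ++ [x]).zip (((x :: xs) ++ [x]).tail) = (x :: xs).zip (xs ++ [x]) := by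
      have h2 : ((x :: xs) ++ [x]).tail = (xs ++ [x]) ++ ([] : List Str) := by simp
      rw [h2]
      show ((x :: xs) ++ [x]).zip ((xs ++ [x]) ++ []) = _
      rw [List.zip_append (by simp)]
      simp
    rw [h3]

lemma prefix_eq_take {y l : Str} (h : y <+: l) : y = l.take y.length := by
  obtain ⟨t, rfl⟩ := h
  simp

lemma take_drop_comm (l : Str) (t m : ℕ) : (l.drop t).take m = (l.take (t + m)).drop t := by
  rw [List.drop_take]
  congr 1
  omega

lemma prefix_drop_of_take_eq {y l l' : Str} {t N : ℕ} (h : y <+: l.drop t)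
    (hN : t + y.length ≤ N) (he : l.take N = l'.take N) : y <+: l'.drop t := by
  have h1 : y = (l.drop t).take y.length := prefix_eq_take h
  have h2 : ∀ u : Str, (u.drop t).take y.length = ((u.take N).drop t).take y.length := by
    intro u
    rw [List.drop_take]
    rw [List.take_take]
    congr 1
    omega
  have h3 : y = (l'.drop t).take y.length := by
    rw [h2, ← he, ← h2, ← h1]
  rw [h3]
  exact List.take_prefix _ _

lemma infix_of_nested {w y x : Str} {q p : ℕ} (hy : y <+: w.drop q) (hx : x <+: w.drop p)
    (hqp : q ≤ p) (hend : p + x.length ≤ q + y.length) : x <:+: y := by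
  have hxe : x = ((w.drop q).drop (p - q)).take x.length := by
    rw [List.drop_drop]
    have e : q + (p - q) = p := by omega
    rw [e]
    exact prefix_eq_take hx
  have hye : y = (w.drop q).take y.length := prefix_eq_take hy
  have h5 : y.drop (p - q) = ((w.drop q).drop (p - q)).take (y.length - (p - q)) := by
    conv_lhs => rw [hye]
    rw [List.drop_take]
  have hkey : x = (y.drop (p - q)).take x.length := by
    rw [h5, List.take_take, min_eq_left (by omega)]
    exact hxe
  rw [hkey]
  exact ((y.drop (p - q)).take_prefix x.length).isInfix.trans (y.drop_suffix (p - q)).isInfix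

lemma prefix_drop_isInfix {y l : Str} {t : ℕ} (h : y <+: l.drop t) : y <:+: l :=
  h.isInfix.trans (l.drop_suffix t).isInfix

lemma infix_exists_drop {y u : Str} (h : y <:+: u) : ∃ t, y <+: u.drop t := by
  obtain ⟨a, b, rfl⟩ := h
  exact ⟨a.length, by simp⟩

lemma pos_le_of_prefix_drop {y u : Str} {t : ℕ} (hy : y ≠ []) (h : y <+: u.drop t) :
    t + y.length ≤ u.length := by
  have := h.length_le
  simp at this
  have : y.length ≥ 1 := List.length_pos_iff.mpr hy
  omega

lemma distStr_bound {u v w : Str} {p q : ℕ} (hv : v <+: u.drop p) (hw : w <+: u.drop q)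
    (hpq : p < q) (hvne : v ≠ []) (hwne : w ≠ []) (hsub : ¬ w <:+: v) :
    distStr v w ≤ q - p := by
  by_cases hcase : v.length ≤ q - p
  · exact le_trans (distStr_le v w) hcase
  push_neg at hcase
  by_cases hcase2 : q + w.length ≤ p + v.length
  · exact absurd (infix_of_nested hv hw (le_of_lt hpq) hcase2) hsub
  push_neg at hcase2
  -- overlap witness
  set k := p + v.length - q with hk
  have hkpos : 0 < k := by omega
  have hklt : k < w.length := by omega
  have hveq : v = (u.drop p).take v.length := prefix_eq_take hv
  have hweq : w = (u.drop q).take w.length := prefix_eq_take hw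
  have ht : v.drop (q - p) = (u.drop q).take k := by
    conv_lhs => rw [hveq]
    rw [List.drop_take, List.drop_drop]
    congr 1
    · omega
    · congr 1; omega
  have htw : v.drop (q - p) = w.take k := by
    rw [ht, hweq, List.take_take, min_eq_left (le_of_lt hklt)]
  have hmem : k ∈ ovSet v w := by
    refine ⟨v.drop (q - p), ?_, ⟨v.take (q - p), ?_, ?_⟩, ⟨w.drop k, ?_, ?_⟩⟩
    · rw [List.length_drop]; omega
    · apply List.ne_nil_of_length_pos
      rw [List.length_take]
      omega
    · simp
    · apply List.ne_nil_of_length_pos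
      rw [List.length_drop]
      omega
    · rw [htw]; simp
  have := le_ov hmem
  rw [distStr]
  omega

lemma headI_prefix_superstr {c : List Str} (hc : c ≠ []) (hcz : ∀ z ∈ c, z ≠ []) :
    c.headI <+: superstr c := by
  obtain ⟨h, tl, rfl⟩ := List.exists_cons_of_ne_nil hc
  exact head_prefix_superstr tl h hcz

lemma insert_cycle {c : List Str} (hc : c ≠ []) (hcz : ∀ z ∈ c, z ≠ [])
    {x' : Str} (hx' : x' = c.headI ∨ x' = rc c.headI) :
    ∃ M β γ : Str, M = β ++ x' ∧ M = x' ++ γ ∧ β.length = cycleWeight c ∧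
      ∃ q ≤ β.length, (superstr c <+: M.drop q ∨ rc (superstr c) <+: M.drop q) := by
  obtain ⟨h, tl, rfl⟩ := List.exists_cons_of_ne_nil hc
  simp only [List.headI_cons] at hx'
  have hhe : h ≠ [] := hcz h (by simp)
  have helems : ∀ z ∈ (h :: tl) ++ [h], z ≠ [] := by
    intro z hz
    rcases List.mem_append.mp hz with hz | hz
    · exact hcz z hz
    · simp at hz; subst hz; exact hhe
  obtain ⟨t, htW, htl⟩ := superstr_append_last (h :: tl) h
  have hcw : pathW ((h :: tl) ++ [h]) = cycleWeight (h :: tl) := by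
    have := cycleWeight_eq_pathW (h :: tl) (by simp)
    simpa using this.symm
  obtain ⟨γ₀, hγ₀⟩ : h <+: superstr ((h :: tl) ++ [h]) := by
    show h <+: superstr (h :: (tl ++ [h]))
    exact head_prefix_superstr (tl ++ [h]) h (by simpa using helems)
  obtain ⟨e, he⟩ : superstr (h :: tl) <+: superstr ((h :: tl) ++ [h]) :=
    superstr_prefix_append _ h (by simp) helems
  have hσh : h <+: superstr (h :: tl) := head_prefix_superstr tl h hcz
  simp only [List.cons_append] at htW htl hcw hγ₀ he
  have hWlen : (superstr (h :: (tl ++ [h]))).length = t.length + h.length := by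
    rw [htW]; simp
  have hγlen : γ₀.length = t.length := by
    have := congrArg List.length hγ₀
    simp at this
    omega
  have hβcw : t.length = cycleWeight (h :: tl) := by rw [htl, hcw]
  rcases hx' with h1 | h1 <;> rw [h1]
  · exact ⟨superstr (h :: (tl ++ [h])), t, γ₀, htW, hγ₀.symm, hβcw, 0, Nat.zero_le _,
      Or.inl (by rw [List.drop_zero]; exact ⟨e, he⟩)⟩
  · refine ⟨rc (superstr (h :: (tl ++ [h]))), rc γ₀, rc t, ?_, ?_,
      by rw [length_rc]; omega, ?_⟩
    · rw [← hγ₀, rc_append]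
    · rw [htW, rc_append]
    · refine ⟨e.length, ?_, Or.inr ?_⟩
      · have h1 : (superstr (h :: tl)).length + e.length
            = (superstr (h :: (tl ++ [h]))).length := by
          rw [← he]; simp
        have h2 : h.length ≤ (superstr (h :: tl)).length := hσh.length_le
        rw [length_rc]
        omega
      · have h3 : rc (superstr (h :: (tl ++ [h]))) = rc e ++ rc (superstr (h :: tl)) := by
          rw [← he, rc_append]
        rw [h3]
        have h4 : e.length = (rc e).length := (length_rc e).symm
        rw [h4, List.drop_left]

lemma drop_append_ge {α : Type*} {l₁ l₂ : List α} {t : ℕ} (h : l₁.length ≤ t) :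
    (l₁ ++ l₂).drop t = l₂.drop (t - l₁.length) := by
  have e : t = l₁.length + (t - l₁.length) := by omega
  conv_lhs => rw [e, List.drop_append]
  simp

lemma insert_all (S : Finset Str) (hS : SubstrFree S)
    (xc : List Str → Str) (pos : List Str → ℕ) :
    ∀ (n : ℕ) (D : Finset (List Str)), D.card = n →
    (∀ c ∈ D, c ≠ [] ∧ (∀ z ∈ c, z ≠ []) ∧ (xc c = c.headI ∨ xc c = rc c.headI) ∧
      xc c ≠ [] ∧ (xc c ∈ S ∨ rc (xc c) ∈ S)) →
    (∀ c ∈ D, ∀ d ∈ D, c ≠ d → xc c ≠ xc d) →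
    ∀ w : Str, (∀ c ∈ D, xc c <+: w.drop (pos c)) →
    ∃ w' : Str, w'.length = w.length + ∑ c ∈ D, cycleWeight c ∧
      (∀ c ∈ D, superstr c <:+: w' ∨ rc (superstr c) <:+: w') ∧
      (∀ (y : Str) (t : ℕ), (∀ c ∈ D, pos c ≤ t) → y <+: w.drop t →
        ∃ t', t ≤ t' ∧ y <+: w'.drop t') := by
  intro n
  induction n with
  | zero =>
    intro D hcard _ _ w hw
    rw [Finset.card_eq_zero] at hcard
    subst hcard
    exact ⟨w, by simp, by simp, fun y t _ h => ⟨t, le_refl t, h⟩⟩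
  | succ n IH =>
    intro D hcard hprops hinj w hw
    have hDne : D.Nonempty := Finset.card_pos.mp (by omega)
    obtain ⟨c, hcD, hmax⟩ := D.exists_max_image pos hDne
    obtain ⟨hcne, hcz, hxcor, hxcne, hxcS⟩ := hprops c hcD
    have hocc : xc c <+: w.drop (pos c) := hw c hcD
    have hposw : pos c + (xc c).length ≤ w.length := pos_le_of_prefix_drop hxcne hocc
    obtain ⟨b, hb⟩ := hocc
    have hocc : xc c <+: w.drop (pos c) := ⟨b, hb⟩
    set a := w.take (pos c) with ha
    have halen : a.length = pos c := by
      rw [ha, List.length_take]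
      omega
    have hwsplit : w = a ++ (xc c ++ b) := by
      rw [hb, ha, List.take_append_drop]
    obtain ⟨M, β, γ, hMβ, hMγ, hβlen, q, hq, hocc2⟩ := insert_cycle hcne hcz hxcor
    set w₁ := a ++ (M ++ b) with hw₁
    have hMlen : M.length = β.length + (xc c).length := by rw [hMβ]; simp
    have hw₁len : w₁.length = w.length + cycleWeight c := by
      rw [hw₁, hwsplit, ← hβlen]
      simp
      omega
    -- (F1) take equality up to N := pos c + |xc c|
    have hF1 : w.take (pos c + (xc c).length) = w₁.take (pos c + (xc c).length) := by
      conv_lhs => rw [hwsplit]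
      rw [hw₁, ← halen, List.take_append, List.take_append]
      rw [hMγ]
      rw [List.append_assoc]
      simp [List.take_append]
    -- (F2) suffix shift
    have hF2 : ∀ (y : Str) (t : ℕ), pos c ≤ t → y <+: w.drop t →
        y <+: w₁.drop (t + β.length) := by
      intro y t hct hyt
      have h1 : w.drop t = (xc c ++ b).drop (t - pos c) := by
        conv_lhs => rw [hwsplit]
        rw [drop_append_ge (by omega), halen]
      have h2 : w₁.drop (t + β.length) = (xc c ++ b).drop (t - pos c) := by
        have he1 : w₁ = (a ++ β) ++ (xc c ++ b) := by rw [hw₁, hMβ]; simp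
        rw [he1, drop_append_ge (by simp [halen]; omega)]
        congr 1
        simp [halen]
        omega
      rw [h2, ← h1]
      exact hyt
    -- (F3) occurrence of superstr c in w₁
    have hF3 : (superstr c <+: w₁.drop (pos c + q) ∨ rc (superstr c) <+: w₁.drop (pos c + q)) := by
      have h1 : w₁.drop (pos c + q) = M.drop q ++ b := by
        rw [hw₁, ← halen, List.drop_append, List.drop_append_of_le_length (by omega)]
        simp
      rcases hocc2 with h | h
      · exact Or.inl (by rw [h1]; exact h.trans (List.prefix_append _ _))
      · exact Or.inr (by rw [h1]; exact h.trans (List.prefix_append _ _))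
    -- occurrences of other cycles preserved at same positions
    have hpres : ∀ d ∈ D.erase c, xc d <+: w₁.drop (pos d) := by
      intro d hd
      have hdD : d ∈ D := Finset.mem_of_mem_erase hd
      have hdc : d ≠ c := Finset.ne_of_mem_erase hd
      obtain ⟨hdne, hdz, hdor, hdxne, hdxS⟩ := hprops d hdD
      have hne' : xc c ≠ xc d := hinj c hcD d hdD (Ne.symm hdc)
      have hoccd : xc d <+: w.drop (pos d) := hw d hdD
      have hple : pos d ≤ pos c := hmax d hdD
      have hposne : pos d ≠ pos c := by
        intro heq
        rw [heq] at hoccd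
        rcases le_total (xc d).length (xc c).length with hll | hll
        · exact hS (xc d) hdxS (xc c) hxcS (Ne.symm hne')
            (List.prefix_of_prefix_length_le hoccd hocc hll).isInfix
        · exact hS (xc c) hxcS (xc d) hdxS hne'
            (List.prefix_of_prefix_length_le hocc hoccd hll).isInfix
      have hplt : pos d < pos c := lt_of_le_of_ne hple hposne
      have hend : pos d + (xc d).length ≤ pos c + (xc c).length := by
        by_contra hcon
        push_neg at hcon
        exact hS (xc c) hxcS (xc d) hdxS hne'
          (infix_of_nested hoccd hocc (le_of_lt hplt) (le_of_lt hcon))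
      exact prefix_drop_of_take_eq hoccd hend hF1
    -- apply IH
    obtain ⟨w₂, hlen₂, hσ₂, hguard₂⟩ := IH (D.erase c)
      (by rw [Finset.card_erase_of_mem hcD, hcard]; rfl)
      (fun d hd => hprops d (Finset.mem_of_mem_erase hd))
      (fun d hd e he' => hinj d (Finset.mem_of_mem_erase hd) e (Finset.mem_of_mem_erase he'))
      w₁ hpres
    refine ⟨w₂, ?_, ?_, ?_⟩
    · rw [hlen₂, hw₁len, ← Finset.add_sum_erase D cycleWeight hcD]
      omega
    · intro d hd
      by_cases hdc : d = c
      · subst hdc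
        have hall : ∀ e ∈ D.erase d, pos e ≤ pos d + q := by
          intro e he'
          exact le_trans (hmax e (Finset.mem_of_mem_erase he')) (Nat.le_add_right _ _)
        rcases hF3 with h | h
        · obtain ⟨t', _, ht'⟩ := hguard₂ (superstr d) (pos d + q) hall h
          exact Or.inl (prefix_drop_isInfix ht')
        · obtain ⟨t', _, ht'⟩ := hguard₂ (rc (superstr d)) (pos d + q) hall h
          exact Or.inr (prefix_drop_isInfix ht')
      · exact hσ₂ d (Finset.mem_erase.mpr ⟨hdc, hd⟩)
    · intro y t hposall hyt
      have h1 : y <+: w₁.drop (t + β.length) := hF2 y t (hposall c hcD) hyt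
      obtain ⟨t', ht'1, ht'2⟩ := hguard₂ y (t + β.length)
        (fun e he' => le_trans (hposall e (Finset.mem_of_mem_erase he')) (Nat.le_add_right _ _)) h1
      exact ⟨t', by omega, ht'2⟩

def DNA.idx : DNA → ℕ
  | .A => 0 | .T => 1 | .G => 2 | .C => 3

lemma DNA.idx_inj : Function.Injective DNA.idx := by
  intro a b h
  cases a <;> cases b <;> simp [DNA.idx] at h ⊢

def codeStr (s : Str) : ℕ := Encodable.encode (s.map DNA.idx)

lemma codeStr_inj : Function.Injective codeStr := by
  intro a b h
  exact List.map_injective_iff.mpr DNA.idx_inj (Encodable.encode_injective h)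

open Classical in
noncomputable def repMin (s : Str) : Str := if codeStr s ≤ codeStr (rc s) then s else rc s

lemma repMin_mem (s : Str) : repMin s = s ∨ repMin s = rc s := by
  unfold repMin; split_ifs <;> simp

lemma repMin_rc (s : Str) : repMin (rc s) = repMin s := by
  unfold repMin
  rw [rc_rc]
  split_ifs with h1 h2 h2
  · exact (codeStr_inj (le_antisymm h2 h1)).symm
  · rfl
  · rfl
  · omega

open Classical in
noncomputable def gRep (u s : Str) : Str := if (repMin s) <:+: u then repMin s else rc (repMin s)

lemma gRep_rc (u s : Str) : gRep u (rc s) = gRep u s := by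
  unfold gRep
  rw [repMin_rc]

lemma gRep_mem (u s : Str) : gRep u s = s ∨ gRep u s = rc s := by
  unfold gRep
  rcases repMin_mem s with h | h <;> rw [h] <;> split_ifs <;> simp [rc_rc]

lemma gRep_infix {u s : Str} (h : s <:+: u ∨ rc s <:+: u) : gRep u s <:+: u := by
  unfold gRep
  split_ifs with h1
  · exact h1
  · rcases repMin_mem s with h2 | h2 <;> rw [h2] at h1 ⊢
    · tauto
    · rw [rc_rc]; tauto

lemma exists_sorted_list (pos : Str → ℕ) :
    ∀ (n : ℕ) (V : Finset Str), V.card = n →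
    (∀ v ∈ V, ∀ w ∈ V, v ≠ w → pos v ≠ pos w) →
    ∃ L : List Str, L.toFinset = V ∧ L.Nodup ∧ L.Chain' (fun a b => pos a < pos b) := by
  intro n
  induction n with
  | zero =>
    intro V hcard _
    rw [Finset.card_eq_zero] at hcard
    exact ⟨[], by simp [hcard], by simp, List.isChain_nil⟩
  | succ n IH =>
    intro V hcard hinj
    have hVne : V.Nonempty := Finset.card_pos.mp (by omega)
    obtain ⟨v, hv, hmin⟩ := V.exists_min_image pos hVne
    obtain ⟨L', hL'fin, hL'nd, hL'ch⟩ := IH (V.erase v)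
      (by rw [Finset.card_erase_of_mem hv, hcard]; rfl)
      (fun a ha b hb => hinj a (Finset.mem_of_mem_erase ha) b (Finset.mem_of_mem_erase hb))
    refine ⟨v :: L', ?_, ?_, ?_⟩
    · rw [List.toFinset_cons, hL'fin, Finset.insert_erase hv]
    · rw [List.nodup_cons]
      refine ⟨fun hmem => ?_, hL'nd⟩
      have : v ∈ V.erase v := hL'fin ▸ List.mem_toFinset.mpr hmem
      exact (Finset.mem_erase.mp this).1 rfl
    · simp only [List.Chain', List.isChain_cons]
      refine ⟨fun z hz => ?_, hL'ch⟩
      have hzmem : z ∈ L' := List.mem_of_mem_head? hz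
      have hzV : z ∈ V.erase v := hL'fin ▸ List.mem_toFinset.mpr hzmem
      have hzv : z ≠ v := (Finset.mem_erase.mp hzV).1
      have h1 : pos v ≤ pos z := hmin z (Finset.mem_of_mem_erase hzV)
      have h2 : pos v ≠ pos z := hinj v hv z (Finset.mem_of_mem_erase hzV) (Ne.symm hzv)
      omega

lemma pathW_append_one : ∀ (l : List Str) (hl : l ≠ []) (x : Str),
    pathW (l ++ [x]) = pathW l + distStr (l.getLast hl) x
  | [v], _, x => by simp [pathW]
  | v :: z :: r, _, x => by
    have IH := pathW_append_one (z :: r) (by simp) x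
    show pathW (v :: z :: (r ++ [x])) = _
    have h1 : pathW (v :: z :: (r ++ [x])) = distStr v z + pathW (z :: (r ++ [x])) := rfl
    have h2 : pathW (v :: z :: r) = distStr v z + pathW (z :: r) := rfl
    have h3 : (v :: z :: r).getLast (by simp) = (z :: r).getLast (by simp) :=
      List.getLast_cons (by simp)
    rw [h1, h2, h3]
    simp only [List.cons_append] at IH
    omega

lemma pathW_le_pos {S : Finset Str} (hS : SubstrFree S) {u : Str} (pos : Str → ℕ) :
    ∀ (L : List Str) (v : Str),
    (∀ z ∈ v :: L, z <+: u.drop (pos z) ∧ (z ∈ S ∨ rc z ∈ S) ∧ z ≠ []) →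
    (v :: L).Chain' (fun a b => pos a < pos b) →
    pathW (v :: L) + pos v ≤ pos ((v :: L).getLast (by simp)) := by
  intro L
  induction L with
  | nil =>
    intro v _ _
    simp [pathW]
  | cons z r IHr =>
    intro v hprops hch
    obtain ⟨hvocc, hvS, hvne⟩ := hprops v (by simp)
    obtain ⟨hzocc, hzS, hzne⟩ := hprops z (by simp)
    simp only [List.Chain', List.isChain_cons_cons] at hch
    obtain ⟨hvz, hch'⟩ := hch
    have hne : v ≠ z := fun h => by rw [h] at hvz; omega
    have hnsub : ¬ z <:+: v := hS z hzS v hvS (Ne.symm hne)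
    have hdist : distStr v z ≤ pos z - pos v := distStr_bound hvocc hzocc hvz hvne hzne hnsub
    have IH := IHr z (fun w hw => hprops w (by simp at hw ⊢; tauto)) hch'
    have h1 : pathW (v :: z :: r) = distStr v z + pathW (z :: r) := rfl
    have h3 : (v :: z :: r).getLast (by simp) = (z :: r).getLast (by simp) :=
      List.getLast_cons (by simp)
    rw [h1, h3]
    omega

lemma exists_cover (S : Finset Str) (hS : SubstrFree S) (hrc : ∀ s ∈ S, rc s ≠ s)
    (u : Str) (hu : ApproxSol S u) :
    ∃ C' : Finset (List Str), IsCycleCover S C' ∧ coverWeight C' ≤ u.length := by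
  classical
  have hne : ∀ s ∈ S, s ≠ [] := by
    intro s hs h
    exact hrc s hs (by rw [h]; rfl)
  rcases Finset.eq_empty_or_nonempty S with rfl | hSne
  · refine ⟨∅, ⟨?_, ?_, ?_, ?_, ?_⟩, ?_⟩ <;> simp [coverWeight]
  set V := S.image (gRep u) with hV
  set pos : Str → ℕ := fun v => sInf {k | v <+: u.drop k} with hpos
  have hmemV : ∀ v ∈ V, (v ∈ S ∨ rc v ∈ S) ∧ v ≠ [] ∧ v <+: u.drop (pos v) := by
    intro v hv
    obtain ⟨s, hs, rfl⟩ := Finset.mem_image.mp hv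
    have hmem : gRep u s ∈ S ∨ rc (gRep u s) ∈ S := by
      rcases gRep_mem u s with h | h <;> rw [h]
      · exact Or.inl hs
      · exact Or.inr (by rw [rc_rc]; exact hs)
    have hne' : gRep u s ≠ [] := by
      rcases hmem with h | h
      · exact hne _ h
      · intro h2
        exact hne _ h (by rw [h2]; rfl)
    have hinf : gRep u s <:+: u := gRep_infix (hu s hs)
    obtain ⟨t, ht⟩ := infix_exists_drop hinf
    refine ⟨hmem, hne', ?_⟩
    show gRep u s <+: u.drop (sInf {k | gRep u s <+: u.drop k})
    have hnonempty : {k | gRep u s <+: u.drop k}.Nonempty := ⟨t, ht⟩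
    exact Nat.sInf_mem hnonempty
  have hposinj : ∀ v ∈ V, ∀ w ∈ V, v ≠ w → pos v ≠ pos w := by
    intro v hv w hw hvw heq
    obtain ⟨hvS, hvne, hvocc⟩ := hmemV v hv
    obtain ⟨hwS, hwne, hwocc⟩ := hmemV w hw
    rw [heq] at hvocc
    rcases le_total v.length w.length with h | h
    · exact hS v hvS w hwS hvw (List.prefix_of_prefix_length_le hvocc hwocc h).isInfix
    · exact hS w hwS v hvS (Ne.symm hvw) (List.prefix_of_prefix_length_le hwocc hvocc h).isInfix
  obtain ⟨L, hLfin, hLnd, hLch⟩ := exists_sorted_list pos V.card V rfl hposinj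
  have hLne : L ≠ [] := by
    intro h
    obtain ⟨s, hs⟩ := hSne
    have : gRep u s ∈ V := Finset.mem_image_of_mem _ hs
    rw [← hLfin, h] at this
    simp at this
  have hmemL : ∀ v ∈ L, v ∈ V := fun v hv => hLfin ▸ List.mem_toFinset.mpr hv
  -- the cycle weight bound
  obtain ⟨v₀, L', rfl⟩ := List.exists_cons_of_ne_nil hLne
  have hprops : ∀ z ∈ v₀ :: L', z <+: u.drop (pos z) ∧ (z ∈ S ∨ rc z ∈ S) ∧ z ≠ [] := by
    intro z hz
    obtain ⟨h1, h2, h3⟩ := hmemV z (hmemL z hz)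
    exact ⟨h3, h1, h2⟩
  have htel := pathW_le_pos hS pos L' v₀ hprops hLch
  set lst := (v₀ :: L').getLast (by simp) with hlst
  have hlstmem : lst ∈ v₀ :: L' := List.getLast_mem _
  obtain ⟨hlstocc, hlstS, hlstne⟩ := hprops lst hlstmem
  have hlstlen : pos lst + lst.length ≤ u.length := pos_le_of_prefix_drop hlstne hlstocc
  have hcw : cycleWeight (v₀ :: L') = pathW (v₀ :: L') + distStr lst ((v₀ :: L').headI) := by
    rw [cycleWeight_eq_pathW _ (by simp), pathW_append_one (v₀ :: L') (by simp), hlst]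
  have hbound : cycleWeight (v₀ :: L') ≤ u.length := by
    have hd : distStr lst ((v₀ :: L').headI) ≤ lst.length := distStr_le _ _
    omega
  -- assemble the cycle cover
  refine ⟨{v₀ :: L'}, ⟨?_, ?_, ?_, ?_, ?_⟩, ?_⟩
  · intro c hc
    rw [Finset.mem_singleton] at hc
    subst hc
    simp
  · intro c hc
    rw [Finset.mem_singleton] at hc
    subst hc
    exact hLnd
  · intro c hc d hd hcd
    rw [Finset.mem_singleton] at hc hd
    exact absurd (hc.trans hd.symm) hcd
  · intro c hc x hx
    rw [Finset.mem_singleton] at hc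
    subst hc
    exact (hmemV x (hmemL x hx)).1
  · intro s hs
    have hgV : gRep u s ∈ V := Finset.mem_image_of_mem _ hs
    have hrcnot : rc (gRep u s) ∉ V := by
      intro hmem
      obtain ⟨s', hs', heq⟩ := Finset.mem_image.mp hmem
      have hss' : s' = s ∨ s' = rc s := by
        rcases gRep_mem u s' with h | h <;> rcases gRep_mem u s with h2 | h2 <;>
          rw [h, h2] at heq
        · right; exact heq
        · left; rw [rc_rc] at heq; exact heq
        · left; exact rc_inj heq
        · right; exact rc_inj heq
      have hgg : gRep u s' = gRep u s := by
        rcases hss' with rfl | rfl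
        · rfl
        · exact gRep_rc u s
      rw [hgg] at heq
      rcases gRep_mem u s with h2 | h2 <;> rw [h2] at heq
      · exact hrc s hs heq.symm
      · exact hrc s hs (rc_inj heq).symm
    have hmemiff : ∀ x : Str, (∃ c ∈ ({v₀ :: L'} : Finset (List Str)), x ∈ c) ↔ x ∈ V := by
      intro x
      constructor
      · rintro ⟨c, hc, hxc⟩
        rw [Finset.mem_singleton] at hc
        subst hc
        exact hmemL x hxc
      · intro hx
        exact ⟨v₀ :: L', Finset.mem_singleton_self _, by
          rw [← hLfin] at hx; exact List.mem_toFinset.mp hx⟩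
    rcases gRep_mem u s with h | h
    · left
      constructor
      · exact (hmemiff s).mpr (h ▸ hgV)
      · intro hcon
        exact hrcnot (by rw [h]; exact (hmemiff (rc s)).mp hcon)
    · right
      constructor
      · exact (hmemiff (rc s)).mpr (h ▸ hgV)
      · intro hcon
        have : s ∈ V := (hmemiff s).mp hcon
        have h2 : rc (gRep u s) = s := by rw [h, rc_rc]
        exact hrcnot (by rw [h2]; exact this)
  · rw [coverWeight, Finset.sum_singleton]
    exact hbound

lemma headI_mem {α : Type*} [Inhabited α] {l : List α} (h : l ≠ []) : l.headI ∈ l := by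
  obtain ⟨a, t, rfl⟩ := List.exists_cons_of_ne_nil h
  simp

lemma exists_opt (S : Finset Str) : ∃ u : Str, ApproxSol S u ∧ u.length = OPT S := by
  have hne : {n | ∃ u : Str, ApproxSol S u ∧ u.length = n}.Nonempty := by
    refine ⟨S.toList.flatten.length, S.toList.flatten, ?_, rfl⟩
    intro s hs
    exact Or.inl (List.infix_of_mem_flatten (Finset.mem_toList.mpr hs))
  obtain ⟨u, hu, hlen⟩ := Nat.sInf_mem hne
  exact ⟨u, hu, hlen⟩

lemma OPT_le {S : Finset Str} {v : Str} (h : ApproxSol S v) : OPT S ≤ v.length :=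
  Nat.sInf_le ⟨v, h, rfl⟩

lemma xor_not_both {a b : Prop} (h : Xor' a b) (ha : a) (hb : b) : False := by
  rcases h with ⟨_, h2⟩ | ⟨_, h2⟩
  · exact h2 hb
  · exact h2 ha

/-- for the set `T` of strings corresponding to the cycles of an optimal
cycle cover, `OPT(T) ≤ OPT(S) + w(CYC(G_S)) ≤ 2·OPT(S)`. -/
theorem opt_T_le_two_opt
    (S : Finset Str) (hS : SubstrFree S)
    (C : Finset (List Str)) (hC : IsCycleCover S C)
    (hopt : ∀ C', IsCycleCover S C' → coverWeight C ≤ coverWeight C') :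
    OPT (C.image superstr) ≤ OPT S + coverWeight C ∧
    OPT S + coverWeight C ≤ 2 * OPT S := by
  classical
  obtain ⟨hCne, hCnd, hCdisj, hCmem, hCcov⟩ := hC
  have hrc : ∀ s ∈ S, rc s ≠ s := by
    intro s hs heq
    have hx := hCcov s hs
    rw [heq] at hx
    rcases hx with ⟨h1, h2⟩ | ⟨h1, h2⟩ <;> exact h2 h1
  have hne : ∀ s ∈ S, s ≠ [] := by
    intro s hs h
    exact hrc s hs (by rw [h]; rfl)
  have hne' : ∀ x : Str, (x ∈ S ∨ rc x ∈ S) → x ≠ [] := by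
    intro x hx h
    rcases hx with hx | hx
    · exact hne x hx h
    · exact hne (rc x) hx (by rw [h]; rfl)
  obtain ⟨u, hu, hulen⟩ := exists_opt S
  -- Part B : coverWeight C ≤ OPT S
  obtain ⟨C', hC', hwle⟩ := exists_cover S hS hrc u hu
  have hB : coverWeight C ≤ OPT S := by
    rw [← hulen]
    exact le_trans (hopt C' hC') hwle
  -- Part A
  set xc : List Str → Str := fun c => if c.headI <:+: u then c.headI else rc c.headI with hxc
  set pos : List Str → ℕ := fun c => sInf {k | xc c <+: u.drop k} with hposd
  have hheadImem : ∀ c ∈ C, c.headI ∈ S ∨ rc c.headI ∈ S := by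
    intro c hc
    exact hCmem c hc c.headI (headI_mem (hCne c hc))
  have hxinf : ∀ c ∈ C, xc c <:+: u := by
    intro c hc
    rw [hxc]
    simp only
    split_ifs with h1
    · exact h1
    · rcases hheadImem c hc with h | h
      · rcases hu c.headI h with h2 | h2
        · exact absurd h2 h1
        · exact h2
      · rcases hu (rc c.headI) h with h2 | h2
        · exact h2
        · rw [rc_rc] at h2
          exact absurd h2 h1
  have hxor : ∀ c ∈ C, xc c = c.headI ∨ xc c = rc c.headI := by
    intro c _
    rw [hxc]
    simp only
    split_ifs <;> simp
  have hxS : ∀ c ∈ C, xc c ∈ S ∨ rc (xc c) ∈ S := by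
    intro c hc
    rcases hxor c hc with h | h <;> rw [h]
    · exact hheadImem c hc
    · rw [rc_rc]
      exact (hheadImem c hc).symm.imp id id
  have hprops : ∀ c ∈ C, c ≠ [] ∧ (∀ z ∈ c, z ≠ []) ∧
      (xc c = c.headI ∨ xc c = rc c.headI) ∧ xc c ≠ [] ∧ (xc c ∈ S ∨ rc (xc c) ∈ S) := by
    intro c hc
    refine ⟨hCne c hc, fun z hz => hne' z (hCmem c hc z hz), hxor c hc, ?_, hxS c hc⟩
    exact hne' (xc c) (hxS c hc)
  have hcross : ∀ c ∈ C, ∀ d ∈ C, c.headI = rc d.headI → False := by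
    intro c hc d hd heq
    have h1 : c.headI ∈ c := headI_mem (hCne c hc)
    have h2 : d.headI ∈ d := headI_mem (hCne d hd)
    rcases hheadImem d hd with hdS | hdS
    · exact xor_not_both (hCcov d.headI hdS) ⟨d, hd, h2⟩ ⟨c, hc, heq ▸ h1⟩
    · refine xor_not_both (hCcov (rc d.headI) hdS) ⟨c, hc, heq ▸ h1⟩ ⟨d, hd, ?_⟩
      rw [rc_rc]
      exact h2
  have hinj : ∀ c ∈ C, ∀ d ∈ C, c ≠ d → xc c ≠ xc d := by
    intro c hc d hd hcd heq
    have h1 : c.headI ∈ c := headI_mem (hCne c hc)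
    have h2 : d.headI ∈ d := headI_mem (hCne d hd)
    rcases hxor c hc with h3 | h3 <;> rcases hxor d hd with h4 | h4 <;>
      rw [h3] at heq <;> rw [h4] at heq
    · exact hCdisj c hc d hd hcd c.headI h1 (heq ▸ h2)
    · exact hcross c hc d hd heq
    · exact hcross d hd c hc heq.symm
    · exact hCdisj c hc d hd hcd c.headI h1 ((rc_inj heq) ▸ h2)
  have hwocc : ∀ c ∈ C, xc c <+: u.drop (pos c) := by
    intro c hc
    obtain ⟨t, ht⟩ := infix_exists_drop (hxinf c hc)
    show xc c <+: u.drop (sInf {k | xc c <+: u.drop k})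
    have hnonempty : {k | xc c <+: u.drop k}.Nonempty := ⟨t, ht⟩
    exact Nat.sInf_mem hnonempty
  obtain ⟨w', hlen', hσ', _⟩ := insert_all S hS xc pos C.card C rfl hprops hinj u hwocc
  have hA : ApproxSol (C.image superstr) w' := by
    intro t ht
    obtain ⟨c, hc, rfl⟩ := Finset.mem_image.mp ht
    exact hσ' c hc
  have hAle : OPT (C.image superstr) ≤ OPT S + coverWeight C := by
    have h1 := OPT_le hA
    rw [hlen', hulen] at h1
    exact h1
  exact ⟨hAle, by omega⟩
end

section
/- Consider any execution of MGREEDY-RC on a substring-free set S, and let C = s'_{i1}, …, s'_{ir}, s'_{i1} be a cycle it closes when moving the string ⟨s'_{i1},…,s'_{ir}⟩ to T (so the cycle-closing edge goes from s'_{ir} to s'_{i1}). Then the closing edge has the smallest overlap among the edges of the cycle: ov(s'_{ir}, s'_{i1}) ≤ ov(s'_{ik}, s'_{i(k+1)}) for all 1 ≤ k < r. -/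
-- ===== auxiliary lemmas =====
namespace SCS
open List

@[simp] lemma compl_compl (a : DNA) : a.compl.compl = a := by cases a <;> rfl

@[simp] lemma rc_rc (s : Str) : rc (rc s) = s := by
  simp [rc, List.map_reverse, List.map_map, Function.comp_def]

lemma rc_append (a b : Str) : rc (a ++ b) = rc b ++ rc a := by
  simp [rc]

@[simp] lemma rc_length (s : Str) : (rc s).length = s.length := by simp [rc]

lemma rc_inj {a b : Str} (h : rc a = rc b) : a = b := by
  have := congrArg rc h; simpa using this

@[simp] lemma rc_nil : rc ([] : Str) = [] := rfl

lemma rc_eq_nil {s : Str} (h : rc s = []) : s = [] := by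
  have := congrArg List.length h; simpa using this

lemma rc_infix {x y : Str} (h : x <:+: y) : rc x <:+: rc y := by
  obtain ⟨s, t, rfl⟩ := h
  exact ⟨rc t, rc s, by simp [rc_append]⟩

/-- the defining set for `ov`. -/
def ovSet (x y : Str) : Set ℕ :=
  {k | ∃ v : Str, v.length = k ∧ (∃ u : Str, u ≠ [] ∧ x = u ++ v) ∧
        (∃ w : Str, w ≠ [] ∧ y = v ++ w)}

lemma ov_def (x y : Str) : ov x y = sSup (ovSet x y) := rfl

lemma ovSet_bdd (x y : Str) : BddAbove (ovSet x y) := by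
  refine ⟨x.length, fun k hk => ?_⟩
  obtain ⟨v, hv, ⟨u, -, rfl⟩, -⟩ := hk
  simp [← hv]

lemma le_ov {x y : Str} {v u w : Str} (hu : u ≠ []) (hw : w ≠ [])
    (hx : x = u ++ v) (hy : y = v ++ w) : v.length ≤ ov x y :=
  le_csSup (ovSet_bdd x y) ⟨v, rfl, ⟨u, hu, hx⟩, ⟨w, hw, hy⟩⟩

lemma ov_attain_pos {x y : Str} (h : 0 < ov x y) :
    ∃ v u w : Str, v.length = ov x y ∧ u ≠ [] ∧ w ≠ [] ∧ x = u ++ v ∧ y = v ++ w := by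
  have hne : (ovSet x y).Nonempty := by
    by_contra hemp
    rw [Set.not_nonempty_iff_eq_empty] at hemp
    rw [ov_def, hemp, csSup_empty] at h; simp at h
  obtain ⟨v, hv, ⟨u, hu, hxx⟩, ⟨w, hw, hyy⟩⟩ := Nat.sSup_mem hne (ovSet_bdd x y)
  exact ⟨v, u, w, hv, hu, hw, hxx, hyy⟩

lemma ov_le_left (x y : Str) : ov x y ≤ x.length := by
  rcases Nat.eq_zero_or_pos (ov x y) with h | h
  · omega
  · obtain ⟨v, u, w, hv, -, -, rfl, -⟩ := ov_attain_pos h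
    simp [← hv]

lemma ov_le_right (x y : Str) : ov x y ≤ y.length := by
  rcases Nat.eq_zero_or_pos (ov x y) with h | h
  · omega
  · obtain ⟨v, u, w, hv, -, -, -, rfl⟩ := ov_attain_pos h
    simp [← hv]

lemma ov_rc (x y : Str) : ov (rc y) (rc x) = ov x y := by
  have key : ∀ a b : Str, ovSet a b ⊆ ovSet (rc b) (rc a) := by
    rintro a b k ⟨v, hv, ⟨u, hu, rfl⟩, ⟨w, hw, rfl⟩⟩
    refine ⟨rc v, by simp [hv], ⟨rc w, fun h => hw (rc_eq_nil h), by rw [← rc_append]⟩,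
      ⟨rc u, fun h => hu (rc_eq_nil h), by rw [← rc_append]⟩⟩
  have : ovSet x y = ovSet (rc y) (rc x) := by
    refine le_antisymm (key x y) ?_
    have := key (rc y) (rc x); simpa using this
  rw [ov_def, ov_def, this]

/-- the overlap string: `x = prefStr x y ++ ovStr x y` and `ovStr x y <+: y`. -/
noncomputable def ovStr (x y : Str) : Str := x.drop (x.length - ov x y)

lemma prefStr_append_ovStr (x y : Str) : prefStr x y ++ ovStr x y = x :=
  List.take_append_drop _ x

lemma ovStr_length (x y : Str) : (ovStr x y).length = ov x y := by
  have := ov_le_left x y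
  simp [ovStr]; omega

lemma ovStr_prefix (x y : Str) : ovStr x y <+: y := by
  rcases Nat.eq_zero_or_pos (ov x y) with h | h
  · have : ovStr x y = [] := by
      have := ovStr_length x y; rw [h] at this
      exact List.length_eq_zero_iff.mp this
    simp [this]
  · obtain ⟨v, u, w, hv, -, -, hx, hy⟩ := ov_attain_pos h
    have hdrop : ovStr x y = v := by
      have : x.length - ov x y = u.length := by
        have := congrArg List.length hx; simp at this; omega
      rw [ovStr, this, hx, List.drop_left]
    rw [hdrop, hy]; exact ⟨w, rfl⟩

end SCS
namespace SCS
open List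

lemma superstr_cons2 (x y : Str) (r : List Str) :
    superstr (x :: y :: r) = prefStr x y ++ superstr (y :: r) := rfl

lemma headI_mem {α} [Inhabited α] {l : List α} (h : l ≠ []) : l.headI ∈ l := by
  cases l with
  | nil => exact absurd rfl h
  | cons a t => simp

lemma getLastD_mem {α} {l : List α} {d : α} (h : l ≠ []) : l.getLastD d ∈ l := by
  induction l generalizing d with
  | nil => exact absurd rfl h
  | cons a t ih =>
    cases t with
    | nil => simp
    | cons b t' => simpa using Or.inr (ih (by simp))

lemma getLastD_cons_ne {α} {l : List α} (d d' : α) (h : l ≠ []) :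
    l.getLastD d = l.getLastD d' := by
  cases l with
  | nil => exact absurd rfl h
  | cons b t =>
    rw [List.getLastD_eq_getLast?, List.getLastD_eq_getLast?,
      List.getLast?_eq_getLast (l := b :: t) (by simp)]
    rfl

lemma getLastD_cons' {α} {l : List α} (a d : α) (h : l ≠ []) :
    (a :: l).getLastD d = l.getLastD d := by
  cases l with
  | nil => exact absurd rfl h
  | cons b t =>
    have h1 : (a :: b :: t).getLastD d = (b :: t).getLastD a := List.getLastD_cons ..
    rw [h1]
    exact getLastD_cons_ne a d (by simp)

lemma getLastD_append {α} {l₁ l₂ : List α} (d : α) (h : l₂ ≠ []) :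
    (l₁ ++ l₂).getLastD d = l₂.getLastD d := by
  induction l₁ with
  | nil => rfl
  | cons a t ih =>
    rw [List.cons_append, getLastD_cons' a d (by simp [h]), ih]

lemma headI_append {α} [Inhabited α] {l₁ l₂ : List α} (h : l₁ ≠ []) :
    (l₁ ++ l₂).headI = l₁.headI := by
  cases l₁ with
  | nil => exact absurd rfl h
  | cons a t => rfl

/-- S1: the head is a prefix of the superstring. -/
lemma headI_prefix_superstr : ∀ (q : List Str), q ≠ [] → q.headI <+: superstr q := by
  intro q
  induction q with
  | nil => intro h; exact absurd rfl h
  | cons z q' ih =>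
    intro _
    cases q' with
    | nil => simp [superstr]
    | cons z' r =>
      rw [superstr_cons2]
      have h1 : z = prefStr z z' ++ ovStr z z' := (prefStr_append_ovStr z z').symm
      have h2 : ovStr z z' <+: superstr (z' :: r) :=
        (ovStr_prefix z z').trans (ih (by simp))
      show (z :: z' :: r).headI <+: _
      simp only [List.headI]
      conv_lhs => rw [h1]
      exact (List.prefix_append_right_inj _).mpr h2

/-- S2: the last element is a suffix of the superstring. -/
lemma getLastD_suffix_superstr : ∀ (q : List Str), q ≠ [] → q.getLastD [] <:+ superstr q := by
  intro q
  induction q with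
  | nil => intro h; exact absurd rfl h
  | cons z q' ih =>
    intro _
    cases q' with
    | nil => simp [superstr]
    | cons z' r =>
      rw [superstr_cons2, getLastD_cons' z [] (by simp)]
      exact (ih (by simp)).trans (List.suffix_append _ _)

lemma getLast_eq_getLastD {α} (l : List α) (h : l ≠ []) (d : α) : l.getLast h = l.getLastD d := by
  induction l with
  | nil => exact absurd rfl h
  | cons a t ih =>
    cases t with
    | nil => rfl
    | cons b t' =>
      rw [List.getLast_cons (by simp), getLastD_cons' a d (by simp), ih (by simp)]

lemma head_eq_headI {α} [Inhabited α] (l : List α) (h : l ≠ []) : l.head h = l.headI := by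
  cases l with
  | nil => exact absurd rfl h
  | cons a t => rfl

/-- SA: superstr of `l ++ [a]`. -/
lemma superstr_concat : ∀ (l : List Str), l ≠ [] → ∀ a : Str,
    superstr (l ++ [a]) =
      (superstr l).take ((superstr l).length - (l.getLastD []).length)
        ++ prefStr (l.getLastD []) a ++ a := by
  intro l
  induction l with
  | nil => intro h; exact absurd rfl h
  | cons b l' ih =>
    intro _ a
    cases l' with
    | nil => simp [superstr, superstr_cons2]
    | cons y l'' =>
      have hne : y :: l'' ≠ [] := by simp
      have iha := ih hne a
      have h0 : (b :: y :: l'') ++ [a] = b :: ((y :: l'') ++ [a]) := by simp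
      have h1 : (y :: l'') ++ [a] = y :: (l'' ++ [a]) := by simp
      have hlen : ((y :: l'').getLastD []).length ≤ (superstr (y :: l'')).length :=
        (getLastD_suffix_superstr (y :: l'') hne).length_le
      rw [h0, h1, superstr_cons2, ← h1, iha, superstr_cons2, getLastD_cons' b [] hne]
      have hN : (prefStr b y ++ superstr (y :: l'')).length - ((y :: l'').getLastD []).length
          = (prefStr b y).length
            + ((superstr (y :: l'')).length - ((y :: l'').getLastD []).length) := by
        rw [List.length_append]; omega
      have hpref : (prefStr b y).take ((prefStr b y).length
          + ((superstr (y :: l'')).length - ((y :: l'').getLastD []).length)) = prefStr b y :=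
        List.take_of_length_le (by omega)
      rw [hN, List.take_append, Nat.add_sub_cancel_left, hpref]
      simp [List.append_assoc]
  
/-- `rcPath` basics -/
@[simp] lemma rcPath_rcPath (p : List Str) : rcPath (rcPath p) = p := by
  simp [rcPath, List.map_reverse, List.map_map, Function.comp_def]

lemma rcPath_append (a b : List Str) : rcPath (a ++ b) = rcPath b ++ rcPath a := by
  simp [rcPath]

@[simp] lemma rcPath_nil : rcPath ([] : List Str) = [] := rfl

@[simp] lemma rcPath_eq_nil_iff {p : List Str} : rcPath p = [] ↔ p = [] := by
  constructor
  · intro h; have := congrArg List.length h; simpa [rcPath] using this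
  · rintro rfl; rfl

lemma mem_rcPath {x : Str} {p : List Str} : x ∈ rcPath p ↔ rc x ∈ p := by
  simp only [rcPath, List.mem_reverse, List.mem_map]
  constructor
  · rintro ⟨a, ha, rfl⟩; simpa [rc_rc] using ha
  · intro h; exact ⟨rc x, h, by simp⟩

lemma rcPath_inj {a b : List Str} (h : rcPath a = rcPath b) : a = b := by
  have := congrArg rcPath h; simpa using this

lemma headI_rcPath {p : List Str} (h : p ≠ []) : (rcPath p).headI = rc (p.getLastD []) := by
  induction p with
  | nil => exact absurd rfl h
  | cons a t ih =>
    cases t with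
    | nil => simp [rcPath]
    | cons b t' =>
      have : rcPath (a :: b :: t') = rcPath (b :: t') ++ [rc a] := by
        simp [rcPath]
      rw [this, headI_append (by simp), ih (by simp), getLastD_cons' a [] (by simp)]

lemma getLastD_rcPath {p : List Str} (h : p ≠ []) : (rcPath p).getLastD [] = rc p.headI := by
  have := headI_rcPath (p := rcPath p) (by simpa using h)
  rw [rcPath_rcPath] at this
  have h2 := congrArg rc this
  rw [rc_rc] at h2
  rw [← h2]

lemma rcPath_length (p : List Str) : (rcPath p).length = p.length := by simp [rcPath]

end SCS
namespace SCS
open List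

lemma rc_take (w : Str) (k : ℕ) : (rc w).take (w.length - k) = rc (w.drop k) := by
  simp only [rc]
  rw [List.map_drop, List.reverse_drop]
  congr 1
  simp

/-- S6: superstr of the reverse-complement path. -/
lemma superstr_rcPath : ∀ (q : List Str), superstr (rcPath q) = rc (superstr q) := by
  intro q
  induction q with
  | nil => simp [superstr]
  | cons z q' ih =>
    cases q' with
    | nil => simp [rcPath, superstr]
    | cons z' r =>
      have hne : z' :: r ≠ [] := by simp
      have hrcne : rcPath (z' :: r) ≠ [] := by simp [hne]
      have hstep : rcPath (z :: z' :: r) = rcPath (z' :: r) ++ [rc z] := by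
        show rcPath ([z] ++ (z' :: r)) = _
        rw [rcPath_append]; rfl
      rw [hstep, superstr_concat _ hrcne, ih, superstr_cons2]
      have hlastD : (rcPath (z' :: r)).getLastD [] = rc ((z' :: r).headI) :=
        getLastD_rcPath hne
      have hheadI : (z' :: r).headI = z' := rfl
      rw [hlastD, hheadI]
      -- B = z' ++ C
      obtain ⟨C, hC⟩ := headI_prefix_superstr (z' :: r) hne
      rw [hheadI] at hC
      set n₀ := ov z z' with hn₀
      have hovrc : ov (rc z') (rc z) = n₀ := ov_rc z z'
      have h1 : prefStr (rc z') (rc z) = rc (z'.drop n₀) := by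
        rw [prefStr, hovrc, rc_length, rc_take]
      have h2 : (rc (superstr (z' :: r))).take
          ((rc (superstr (z' :: r))).length - (rc z').length) = rc C := by
        rw [← hC, rc_append]
        have hlen : (rc C ++ rc z').length - (rc z').length = (rc C).length := by simp
        rw [hlen, List.take_left]
      rw [h1, h2]
      -- goal: rc C ++ rc (z'.drop n₀) ++ rc z = rc (prefStr z z' ++ B)
      rw [← rc_append, ← rc_append, ← hC]
      congr 1
      -- z ++ (z'.drop n₀ ++ C)  vs  prefStr z z' ++ (z' ++ C)
      have hv : z'.take n₀ = ovStr z z' := by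
        have hp := ovStr_prefix z z'
        have hl : (ovStr z z').length = n₀ := ovStr_length z z'
        obtain ⟨t, ht⟩ := hp
        conv_lhs => rw [← ht, ← hl]
        rw [List.take_left]
      have hz : z = prefStr z z' ++ z'.take n₀ := by
        rw [hv]; exact (prefStr_append_ovStr z z').symm
      calc z ++ (z'.drop n₀ ++ C)
          = prefStr z z' ++ z'.take n₀ ++ (z'.drop n₀ ++ C) := by rw [← hz]
        _ = prefStr z z' ++ (z' ++ C) := by
            rw [List.append_assoc, ← List.append_assoc (z'.take n₀), List.take_append_drop]

/-- adjacency in a path -/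
def Adj (π : List Str) (c d : Str) : Prop := ∃ l₁ l₂, π = l₁ ++ c :: d :: l₂

lemma Adj.mem_left {π : List Str} {c d : Str} (h : Adj π c d) : c ∈ π := by
  obtain ⟨l₁, l₂, rfl⟩ := h; simp

lemma Adj.mem_right {π : List Str} {c d : Str} (h : Adj π c d) : d ∈ π := by
  obtain ⟨l₁, l₂, rfl⟩ := h; simp

lemma Adj.length_ge {π : List Str} {c d : Str} (h : Adj π c d) : 2 ≤ π.length := by
  obtain ⟨l₁, l₂, rfl⟩ := h; simp; omega

lemma adj_cons {π : List Str} {c d z : Str} (h : Adj π c d) : Adj (z :: π) c d := by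
  obtain ⟨l₁, l₂, rfl⟩ := h; exact ⟨z :: l₁, l₂, rfl⟩

lemma adj_append_left {π τ : List Str} {c d : Str} (h : Adj π c d) : Adj (π ++ τ) c d := by
  obtain ⟨l₁, l₂, rfl⟩ := h; exact ⟨l₁, l₂ ++ τ, by simp⟩

lemma adj_append_right {π τ : List Str} {c d : Str} (h : Adj τ c d) : Adj (π ++ τ) c d := by
  obtain ⟨l₁, l₂, rfl⟩ := h; exact ⟨π ++ l₁, l₂, by simp⟩

lemma adj_junction {p q : List Str} (hp : p ≠ []) (hq : q ≠ []) :
    Adj (p ++ q) (p.getLastD []) q.headI := by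
  have hp' : p = p.dropLast ++ [p.getLast hp] := (List.dropLast_append_getLast hp).symm
  cases q with
  | nil => exact absurd rfl hq
  | cons b t =>
    refine ⟨p.dropLast, t, ?_⟩
    rw [getLast_eq_getLastD p hp []] at hp'
    conv_lhs => rw [hp']
    simp

lemma adj_append_cases {p q : List Str} {c d : Str} (h : Adj (p ++ q) c d) :
    Adj p c d ∨ (p ≠ [] ∧ q ≠ [] ∧ c = p.getLastD [] ∧ d = q.headI) ∨ Adj q c d := by
  induction p with
  | nil => exact Or.inr (Or.inr (by simpa using h))
  | cons a p' ih =>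
    obtain ⟨l₁, l₂, hl⟩ := h
    cases l₁ with
    | nil =>
      simp only [List.nil_append] at hl
      -- a :: (p' ++ q) = c :: d :: l₂
      have hc : c = a := by injection hl with h1 _; exact h1.symm
      have hrest : p' ++ q = d :: l₂ := by injection hl with _ h2
      cases p' with
      | nil =>
        right; left
        rw [List.nil_append] at hrest
        refine ⟨by simp, by rw [hrest]; simp, by rw [hc]; rfl, by rw [hrest]; rfl⟩
      | cons b p'' =>
        left
        have hd : d = b := by
          rw [List.cons_append] at hrest; injection hrest with h1 _; exact h1.symm
        exact ⟨[], p'' , by rw [hc, hd]; rfl⟩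
    | cons e l₁' =>
      have htl : p' ++ q = l₁' ++ c :: d :: l₂ := by
        rw [List.cons_append] at hl; injection hl with _ h2
      rcases ih ⟨l₁', l₂, htl⟩ with h | ⟨hp', hq, hc, hd⟩ | h
      · exact Or.inl (adj_cons h)
      · exact Or.inr (Or.inl ⟨by simp, hq, by rw [hc, getLastD_cons' a [] hp'], hd⟩)
      · exact Or.inr (Or.inr h)

lemma adj_rcPath {π : List Str} {c d : Str} (h : Adj (rcPath π) c d) : Adj π (rc d) (rc c) := by
  obtain ⟨l₁, l₂, hl⟩ := h
  have : π = rcPath (l₁ ++ c :: d :: l₂) := by rw [← hl, rcPath_rcPath]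
  rw [this]
  have hsplit : l₁ ++ c :: d :: l₂ = l₁ ++ [c] ++ [d] ++ l₂ := by simp
  rw [hsplit, rcPath_append, rcPath_append, rcPath_append]
  exact ⟨rcPath l₂, rcPath l₁, by simp [rcPath]⟩

lemma adj_getD {π : List Str} {k : ℕ} (hk : k + 1 < π.length) :
    Adj π (π.getD k []) (π.getD (k + 1) []) := by
  refine ⟨π.take k, π.drop (k + 2), ?_⟩
  rw [List.getD_eq_getElem π [] (by omega), List.getD_eq_getElem π [] hk]
  conv_lhs => rw [← List.take_append_drop k π]
  congr 1
  rw [List.drop_eq_getElem_cons (by omega)]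
  congr 1
  rw [List.drop_eq_getElem_cons (by omega)]

end SCS
namespace SCS
open List

lemma ne_nil_of_length_pos' {α} {l : List α} (h : 0 < l.length) : l ≠ [] := by
  intro h'; rw [h'] at h; simp at h

lemma infix_of_window {y s x t z : Str} (h : y = s ++ x ++ t) (hz : z <+: y)
    (hle : s.length + x.length ≤ z.length) : x <:+: z := by
  obtain ⟨r, hr⟩ := hz
  have h1 : y.take z.length = z := by rw [← hr, List.take_left]
  have h2 : y.take z.length = s ++ (x ++ t.take (z.length - s.length - x.length)) := by
    rw [h, List.append_assoc, List.take_append,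
      List.take_of_length_le (by omega), List.take_append,
      List.take_of_length_le (by omega)]
  exact ⟨s, t.take (z.length - s.length - x.length),
    by rw [List.append_assoc, ← h2, h1]⟩

lemma drop_window {y s x t : Str} (h : y = s ++ x ++ t) {n : ℕ}
    (h1 : s.length ≤ n) (h2 : n ≤ s.length + x.length) :
    y.drop n = x.drop (n - s.length) ++ t := by
  rw [h, List.append_assoc, List.drop_append,
    List.drop_eq_nil_of_le h1, List.nil_append, List.drop_append,
    show n - s.length - x.length = 0 by omega, List.drop_zero]

/-- OCC: a string of `S ∪ rc S` foreign to the vertices of `q` and dominated by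
the edges of `q` cannot occur inside `superstr q`. -/
lemma occ {S : Finset Str} (hS : SubstrFree S) :
    ∀ (q : List Str), q ≠ [] → ∀ x : Str,
    (x ∈ S ∨ rc x ∈ S) → (∀ z ∈ q, z ∈ S ∨ rc z ∈ S) → (∀ z ∈ q, x ≠ z) →
    (∀ c d, Adj q c d → ov x d ≤ ov c d) → ¬ (x <:+: superstr q) := by
  intro q
  induction q with
  | nil => intro h; exact absurd rfl h
  | cons z q' ih =>
    intro _ x hxS hqS hne hL hinf
    cases q' with
    | nil =>
      exact hS x hxS z (hqS z (by simp)) (hne z (by simp)) (by simpa [superstr] using hinf)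
    | cons z' r =>
      obtain ⟨s, t, hst⟩ := hinf
      have hsq : superstr (z :: z' :: r) = prefStr z z' ++ superstr (z' :: r) :=
        superstr_cons2 z z' r
      have hzpre : z <+: superstr (z :: z' :: r) := by
        have := headI_prefix_superstr (z :: z' :: r) (by simp)
        simpa using this
      have hzlen : z.length = (prefStr z z').length + ov z z' := by
        have h1 := prefStr_append_ovStr z z'
        have h2 := ovStr_length z z'
        have := congrArg List.length h1
        simp at this; omega
      by_cases hc1 : s.length + x.length ≤ z.length
      · have hx_in_z : x <:+: z := infix_of_window hst.symm hzpre hc1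
        exact hS x hxS z (hqS z (by simp)) (hne z (by simp)) hx_in_z
      by_cases hc2 : (prefStr z z').length ≤ s.length
      · -- x occurs in superstr (z' :: r)
        have hApre : prefStr z z' <+: superstr (z :: z' :: r) := by
          rw [hsq]; exact ⟨superstr (z' :: r), rfl⟩
        have hspre : s <+: superstr (z :: z' :: r) := ⟨x ++ t, by rw [← List.append_assoc, hst]⟩
        obtain ⟨s₂, hs₂⟩ := List.prefix_of_prefix_length_le hApre hspre hc2
        have hBeq : superstr (z' :: r) = s₂ ++ x ++ t := by
          have : prefStr z z' ++ superstr (z' :: r)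
              = prefStr z z' ++ (s₂ ++ x ++ t) := by
            rw [← hsq, ← hst, ← hs₂]; simp [List.append_assoc]
          exact (List.append_right_inj _).mp this
        exact ih (by simp) x hxS (fun w hw => hqS w (by simp [hw]))
          (fun w hw => hne w (by simp [hw]))
          (fun c d hadj => hL c d (adj_cons hadj)) ⟨s₂, t, hBeq.symm⟩
      push_neg at hc1 hc2
      have hA_le_z : (prefStr z z').length ≤ z.length := by omega
      have hB : (superstr (z :: z' :: r)).drop (prefStr z z').length = superstr (z' :: r) := by
        rw [hsq]; exact List.drop_left
      have hBdrop : superstr (z' :: r) = x.drop ((prefStr z z').length - s.length) ++ t := by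
        rw [← hB]
        exact drop_window hst.symm (by omega) (by omega)
      obtain ⟨C, hC⟩ := headI_prefix_superstr (z' :: r) (by simp)
      have hC' : superstr (z' :: r) = z' ++ C := by rw [← hC]; rfl
      by_cases hc3 : (prefStr z z').length + z'.length ≤ s.length + x.length
      · -- z' is contained in x
        have hdlen : (x.drop ((prefStr z z').length - s.length)).length
            = s.length + x.length - (prefStr z z').length := by simp; omega
        have hz'pre : z' <+: x.drop ((prefStr z z').length - s.length) :=
          List.prefix_of_prefix_length_le (by rw [hC']; exact ⟨C, rfl⟩)
            ⟨t, hBdrop.symm⟩ (by omega)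
        obtain ⟨w₂, hw₂⟩ := hz'pre
        have hz'infix : z' <:+: x :=
          ⟨x.take ((prefStr z z').length - s.length), w₂, by
            rw [List.append_assoc, hw₂, List.take_append_drop]⟩
        exact hS z' (hqS z' (by simp)) x hxS (Ne.symm (hne z' (by simp))) hz'infix
      push_neg at hc3
      · -- overlap of x with z' beats the edge (z, z')
        set k := (prefStr z z').length - s.length with hk
        have hklen : (x.drop k).length = x.length - k := by simp
        have hxk_pre : x.drop k <+: z' :=
          List.prefix_of_prefix_length_le ⟨t, hBdrop.symm⟩ (by rw [hC']; exact ⟨C, rfl⟩)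
            (by omega)
        obtain ⟨w₁, hw₁⟩ := hxk_pre
        have hw₁ne : w₁ ≠ [] := by
          refine ne_nil_of_length_pos' ?_
          have := congrArg List.length hw₁
          simp at this; omega
        have hune : x.take k ≠ [] := by
          refine ne_nil_of_length_pos' ?_
          simp; omega
        have hov : (x.drop k).length ≤ ov x z' :=
          le_ov hune hw₁ne (List.take_append_drop k x).symm hw₁.symm
        have hedge : Adj (z :: z' :: r) z z' := ⟨[], r, rfl⟩
        have hbound := hL z z' hedge
        omega

/-- easy direction: the overlap of the end strings bounds the superstring overlap. -/
lemma ov_last_head_le {p q : List Str} (hp : p ≠ []) (hq : q ≠ []) :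
    ov (p.getLastD []) q.headI ≤ ov (superstr p) (superstr q) := by
  rcases Nat.eq_zero_or_pos (ov (p.getLastD []) q.headI) with h | h
  · omega
  · obtain ⟨v, u, w, hv, hu, hw, hx, hy⟩ := ov_attain_pos h
    obtain ⟨D, hD⟩ := getLastD_suffix_superstr p hp
    obtain ⟨E, hE⟩ := headI_prefix_superstr q hq
    have h1 : superstr p = (D ++ u) ++ v := by
      rw [← hD, hx]; simp [List.append_assoc]
    have h2 : superstr q = v ++ (w ++ E) := by
      rw [← hE, hy]; simp [List.append_assoc]
    have := le_ov (v := v) (fun hh => hu (List.append_eq_nil_iff.mp hh).2)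
      (fun hh => hw (List.append_eq_nil_iff.mp hh).1) h1 h2
    omega

/-- HL: the key lemma. -/
lemma key_lemma {S : Finset Str} (hS : SubstrFree S) {p q : List Str}
    (hp : p ≠ []) (hq : q ≠ [])
    (hpS : ∀ z ∈ p, z ∈ S ∨ rc z ∈ S) (hqS : ∀ z ∈ q, z ∈ S ∨ rc z ∈ S)
    (hcross : ∀ a ∈ p, ∀ b ∈ q, a ≠ b ∧ rc a ≠ b)
    (hLq : ∀ c d, Adj q c d → ov (p.getLastD []) d ≤ ov c d)
    (hRp : ∀ c d, Adj p c d → ov c q.headI ≤ ov c d) :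
    ov (superstr p) (superstr q) ≤ ov (p.getLastD []) q.headI := by
  rcases Nat.eq_zero_or_pos (ov (superstr p) (superstr q)) with h | h
  · omega
  obtain ⟨v, u, w, hv, hu, hw, hsp, hsq⟩ := ov_attain_pos h
  set x := p.getLastD [] with hxdef
  set y := q.headI with hydef
  have hxmem : x ∈ p := getLastD_mem hp
  have hymem : y ∈ q := headI_mem hq
  have hx_suf : x <:+ superstr p := getLastD_suffix_superstr p hp
  have hy_pre : y <+: superstr q := headI_prefix_superstr q hq
  have hv_suf : v <:+ superstr p := ⟨u, hsp.symm⟩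
  have hv_pre : v <+: superstr q := ⟨w, hsq.symm⟩
  by_cases h1 : x.length < v.length
  · exfalso
    have hxv : x <:+ v := List.suffix_of_suffix_length_le hx_suf hv_suf (by omega)
    obtain ⟨v₁, hv₁⟩ := hxv
    have hx_in : x <:+: superstr q := ⟨v₁, w, by rw [hsq, ← hv₁]⟩
    exact occ hS q hq x (hpS x hxmem) hqS
      (fun z hz => (hcross x hxmem z hz).1)
      (fun c d hadj => hLq c d hadj) hx_in
  by_cases h2 : y.length < v.length
  · exfalso
    have hyv : y <+: v := List.prefix_of_prefix_length_le hy_pre hv_pre (by omega)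
    have hy_in : y <:+: superstr p := (hyv.isInfix).trans hv_suf.isInfix
    have hrc_in : rc y <:+: superstr (rcPath p) := by
      rw [superstr_rcPath]; exact rc_infix hy_in
    refine occ hS (rcPath p) (by simpa using hp) (rc y) ?_ ?_ ?_ ?_ hrc_in
    · rcases hqS y hymem with hy | hy
      · exact Or.inr (by simpa using hy)
      · exact Or.inl hy
    · intro z hz
      rcases hpS (rc z) (mem_rcPath.mp hz) with h' | h'
      · exact Or.inr h'
      · exact Or.inl (by simpa using h')
    · intro z hz hrc
      have hz' : rc z ∈ p := mem_rcPath.mp hz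
      exact (hcross (rc z) hz' y hymem).1 (by rw [← hrc, rc_rc])
    · intro c d hadj
      have hadj' := adj_rcPath hadj
      have hb := hRp (rc d) (rc c) hadj'
      have e1 : ov (rc y) d = ov (rc d) y := by
        conv_lhs => rw [show d = rc (rc d) by rw [rc_rc]]
        exact ov_rc (rc d) y
      have e2 : ov c d = ov (rc d) (rc c) := by
        conv_lhs => rw [show c = rc (rc c) by rw [rc_rc], show d = rc (rc d) by rw [rc_rc]]
        exact ov_rc (rc d) (rc c)
      rw [e1, e2]; exact hb
  -- main case: v is a suffix of x and a prefix of y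
  push_neg at h1 h2
  have hvx : v <:+ x := List.suffix_of_suffix_length_le hv_suf hx_suf h1
  have hvy : v <+: y := List.prefix_of_prefix_length_le hv_pre hy_pre h2
  by_cases hvx' : v.length = x.length
  · exfalso
    have hveq : v = x := hvx.eq_of_length (by omega)
    have hxy : x ≠ y := (hcross x hxmem y hymem).1
    exact hS x (hpS x hxmem) y (hqS y hymem) hxy (by rw [← hveq]; exact hvy.isInfix)
  by_cases hvy' : v.length = y.length
  · exfalso
    have hveq : v = y := hvy.eq_of_length (by omega)
    have hyx : y ≠ x := Ne.symm (hcross x hxmem y hymem).1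
    exact hS y (hqS y hymem) x (hpS x hxmem) hyx (by rw [← hveq]; exact hvx.isInfix)
  obtain ⟨u₁, hu₁⟩ := hvx
  obtain ⟨w₁, hw₁⟩ := hvy
  have hu₁ne : u₁ ≠ [] := by
    refine ne_nil_of_length_pos' ?_
    have := congrArg List.length hu₁; simp at this; omega
  have hw₁ne : w₁ ≠ [] := by
    refine ne_nil_of_length_pos' ?_
    have := congrArg List.length hw₁; simp at this; omega
  have := le_ov hu₁ne hw₁ne hu₁.symm hw₁.symm
  omega

end SCS
namespace SCS
open List

/-- membership of a path in the collection, up to reverse complement. -/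
def Memb (P : Finset (List Str)) (π : List Str) : Prop := π ∈ P ∨ rcPath π ∈ P

lemma Memb.rcPath' {P : Finset (List Str)} {π : List Str} (h : Memb P π) :
    Memb P (rcPath π) := by
  rcases h with h | h
  · exact Or.inr (by rwa [rcPath_rcPath])
  · exact Or.inl h

/-- cross compatibility of two paths. -/
def CrossR (π π' : List Str) : Prop := ∀ a ∈ π, ∀ b ∈ π', a ≠ b ∧ rc a ≠ b

lemma CrossR.symm {π π' : List Str} (h : CrossR π π') : CrossR π' π := by
  intro a ha b hb
  obtain ⟨h1, h2⟩ := h b hb a ha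
  exact ⟨h1.symm, fun hh => h2 (by rw [← hh, rc_rc])⟩

lemma CrossR.rcPath_left {π π' : List Str} (h : CrossR π π') : CrossR (rcPath π) π' := by
  intro a ha b hb
  obtain ⟨h1, h2⟩ := h (rc a) (mem_rcPath.mp ha) b hb
  rw [rc_rc] at h2
  exact ⟨h2, h1⟩

lemma CrossR.rcPath_right {π π' : List Str} (h : CrossR π π') : CrossR π (rcPath π') :=
  (h.symm.rcPath_left).symm

lemma CrossR.append_left {p q π' : List Str} (h1 : CrossR p π') (h2 : CrossR q π') :
    CrossR (p ++ q) π' := by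
  intro a ha b hb
  rcases List.mem_append.mp ha with h | h
  · exact h1 a h b hb
  · exact h2 a h b hb

lemma CrossR.append_right {π p q : List Str} (h1 : CrossR π p) (h2 : CrossR π q) :
    CrossR π (p ++ q) := (CrossR.append_left h1.symm h2.symm).symm

/-- the big invariant. -/
structure Inv (S : Finset Str) (P : Finset (List Str)) : Prop where
  ne : ∀ π, Memb P π → π ≠ []
  ins : ∀ π, Memb P π → ∀ x ∈ π, x ∈ S ∨ rc x ∈ S
  pwr : ∀ π, Memb P π → π.Pairwise (fun a b => a ≠ b ∧ rc a ≠ b)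
  disj : ∀ π π', Memb P π → Memb P π' → π' ≠ π → π' ≠ rcPath π → CrossR π π'
  full : ∀ π, Memb P π → ∀ c d, Adj π c d → ∀ σ τ, Memb P σ → Memb P τ →
      rc (σ.getLastD []) ≠ τ.headI → ov (σ.getLastD []) (τ.headI) ≤ ov c d
  edl : ∀ π, Memb P π → ∀ c d, Adj π c d → ∀ σ, Memb P σ →
      rc (σ.getLastD []) ≠ d → ov (σ.getLastD []) d ≤ ov c d
  edr : ∀ π, Memb P π → ∀ c d, Adj π c d → ∀ τ, Memb P τ →
      rc c ≠ τ.headI → ov c (τ.headI) ≤ ov c d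

lemma memb_init {S : Finset Str} {π : List Str}
    (h : Memb (S.image fun s => [s]) π) : ∃ a, π = [a] ∧ (a ∈ S ∨ rc a ∈ S) := by
  rcases h with h | h
  · obtain ⟨s, hs, hh⟩ := Finset.mem_image.mp h
    exact ⟨s, hh.symm, Or.inl hs⟩
  · obtain ⟨s, hs, hh⟩ := Finset.mem_image.mp h
    refine ⟨rc s, ?_, Or.inr (by simpa using hs)⟩
    have := congrArg rcPath hh
    rw [rcPath_rcPath] at this
    rw [← this]; rfl

lemma inv_init (S : Finset Str) : Inv S (S.image fun s => [s]) := by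
  constructor
  · intro π h; obtain ⟨a, rfl, -⟩ := memb_init h; simp
  · intro π h x hx; obtain ⟨a, rfl, ha⟩ := memb_init h
    simp at hx; rwa [hx]
  · intro π h; obtain ⟨a, rfl, -⟩ := memb_init h; simp
  · intro π π' h h' hne1 hne2
    obtain ⟨a, rfl, -⟩ := memb_init h
    obtain ⟨b, rfl, -⟩ := memb_init h'
    intro x hx y hy
    simp at hx hy
    subst hx; subst hy
    constructor
    · intro hh; exact hne1 (by rw [hh])
    · intro hh; exact hne2 (by rw [← hh]; rfl)
  · intro π h c d hadj
    obtain ⟨a, rfl, -⟩ := memb_init h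
    have := hadj.length_ge; simp at this
  · intro π h c d hadj
    obtain ⟨a, rfl, -⟩ := memb_init h
    have := hadj.length_ge; simp at this
  · intro π h c d hadj
    obtain ⟨a, rfl, -⟩ := memb_init h
    have := hadj.length_ge; simp at this

lemma memb_sdiff {P X : Finset (List Str)} {π : List Str} (h : Memb (P \ X) π) :
    Memb P π := by
  rcases h with h | h
  · exact Or.inl (Finset.mem_sdiff.mp h).1
  · exact Or.inr (Finset.mem_sdiff.mp h).1

lemma inv_close {S : Finset Str} {P : Finset (List Str)} {x : List Str}
    (hinv : Inv S P) : Inv S (P \ {x, rcPath x}) := by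
  constructor
  · exact fun π h => hinv.ne π (memb_sdiff h)
  · exact fun π h => hinv.ins π (memb_sdiff h)
  · exact fun π h => hinv.pwr π (memb_sdiff h)
  · exact fun π π' h h' h1 h2 => hinv.disj π π' (memb_sdiff h) (memb_sdiff h') h1 h2
  · exact fun π h c d ha σ τ hσ hτ he =>
      hinv.full π (memb_sdiff h) c d ha σ τ (memb_sdiff hσ) (memb_sdiff hτ) he
  · exact fun π h c d ha σ hσ he =>
      hinv.edl π (memb_sdiff h) c d ha σ (memb_sdiff hσ) he
  · exact fun π h c d ha τ hτ he =>
      hinv.edr π (memb_sdiff h) c d ha τ (memb_sdiff hτ) he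

end SCS
namespace SCS
open List

lemma pairwise_R_rcPath {l : List Str} (h : l.Pairwise fun a b => a ≠ b ∧ rc a ≠ b) :
    (rcPath l).Pairwise fun a b => a ≠ b ∧ rc a ≠ b := by
  rw [rcPath, List.pairwise_reverse, List.pairwise_map]
  refine h.imp ?_
  rintro a b ⟨h1, h2⟩
  constructor
  · intro hh; exact h1 (rc_inj hh.symm)
  · intro hh; rw [rc_rc] at hh; exact h2 (by rw [← hh])

lemma inv_merge {S : Finset Str} (hS : SubstrFree S) {P : Finset (List Str)} {p q : List Str}
    (hinv : Inv S P) (hp : Memb P p) (hq : Memb P q)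
    (hne : superstr p ≠ superstr q) (hrc : rc (superstr p) ≠ superstr q)
    (hmax : ∀ q₁ q₂, ValidPairP P q₁ q₂ →
      ov (superstr q₁) (superstr q₂) ≤ ov (superstr p) (superstr q)) :
    Inv S (insert (p ++ q) (P \ {p, rcPath p, q, rcPath q})) := by
  have hpne : p ≠ [] := hinv.ne p hp
  have hqne : q ≠ [] := hinv.ne q hq
  have hmne : p ++ q ≠ [] := by simp [hpne]
  have hqp : q ≠ p := fun h => hne (by rw [h])
  have hqrcp : q ≠ rcPath p := fun h => hrc (by rw [h, superstr_rcPath])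
  have hcross : CrossR p q := hinv.disj p q hp hq hqp hqrcp
  have hlp : 1 ≤ p.length := List.length_pos_iff.mpr hpne
  have hlq : 1 ≤ q.length := List.length_pos_iff.mpr hqne
  have hmnp : p ++ q ≠ p := fun h => by
    have := congrArg List.length h; simp only [List.length_append] at this; omega
  have hmnq : p ++ q ≠ q := fun h => by
    have := congrArg List.length h; simp only [List.length_append] at this; omega
  have hmnrcp : p ++ q ≠ rcPath p := fun h => by
    have := congrArg List.length h
    simp only [List.length_append, rcPath_length] at this; omega
  have hmnrcq : p ++ q ≠ rcPath q := fun h => by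
    have := congrArg List.length h
    simp only [List.length_append, rcPath_length] at this; omega
  set P' := insert (p ++ q) (P \ {p, rcPath p, q, rcPath q}) with hP'
  have membCases : ∀ π, Memb P' π → π = p ++ q ∨ π = rcPath (p ++ q) ∨ Memb P π := by
    intro π h
    rcases h with h | h
    · rcases Finset.mem_insert.mp h with h | h
      · exact Or.inl h
      · exact Or.inr (Or.inr (Or.inl (Finset.mem_sdiff.mp h).1))
    · rcases Finset.mem_insert.mp h with h | h
      · refine Or.inr (Or.inl ?_)
        have := congrArg rcPath h
        rwa [rcPath_rcPath] at this
      · exact Or.inr (Or.inr (Or.inr (Finset.mem_sdiff.mp h).1))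
  have ne' : ∀ π, Memb P' π → π ≠ [] := by
    intro π h
    rcases membCases π h with rfl | rfl | h'
    · exact hmne
    · simpa using hmne
    · exact hinv.ne π h'
  have hXrc : ∀ r : List Str, r ∈ ({p, rcPath p, q, rcPath q} : Finset (List Str)) →
      rcPath r ∈ ({p, rcPath p, q, rcPath q} : Finset (List Str)) := by
    intro r hr
    simp only [Finset.mem_insert, Finset.mem_singleton] at hr ⊢
    rcases hr with rfl | rfl | rfl | rfl
    · exact Or.inr (Or.inl rfl)
    · exact Or.inl (by rw [rcPath_rcPath])
    · exact Or.inr (Or.inr (Or.inr rfl))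
    · exact Or.inr (Or.inr (Or.inl (by rw [rcPath_rcPath])))
  have old_surv : ∀ π, Memb P' π → π ≠ p ++ q → π ≠ rcPath (p ++ q) →
      Memb P π ∧ π ≠ p ∧ π ≠ rcPath p ∧ π ≠ q ∧ π ≠ rcPath q := by
    intro π h h1 h2
    have hmemb : Memb P π := by
      rcases membCases π h with h' | h' | h'
      · exact absurd h' h1
      · exact absurd h' h2
      · exact h'
    have key : ∀ r, r ∈ ({p, rcPath p, q, rcPath q} : Finset (List Str)) → π ≠ r := by
      intro r hr heq
      rcases h with h | h
      · rcases Finset.mem_insert.mp h with h' | h'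
        · exact h1 h'
        · exact (Finset.mem_sdiff.mp h').2 (heq ▸ hr)
      · rcases Finset.mem_insert.mp h with h' | h'
        · refine h2 ?_
          have := congrArg rcPath h'
          rwa [rcPath_rcPath] at this
        · exact (Finset.mem_sdiff.mp h').2 (by rw [heq]; exact hXrc r hr)
    exact ⟨hmemb, key p (by simp), key (rcPath p) (by simp), key q (by simp),
      key (rcPath q) (by simp)⟩
  have tailmap : ∀ σ, Memb P' σ →
      ∃ σ', Memb P σ' ∧ σ' ≠ [] ∧ σ'.getLastD [] = σ.getLastD [] := by
    intro σ h
    rcases membCases σ h with rfl | rfl | h'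
    · exact ⟨q, hq, hqne, (getLastD_append [] hqne).symm⟩
    · refine ⟨rcPath p, hp.rcPath', by simpa using hpne, ?_⟩
      rw [getLastD_rcPath hpne, getLastD_rcPath hmne, headI_append hpne]
    · exact ⟨σ, h', hinv.ne σ h', rfl⟩
  have headmap : ∀ τ, Memb P' τ →
      ∃ τ', Memb P τ' ∧ τ' ≠ [] ∧ τ'.headI = τ.headI := by
    intro τ h
    rcases membCases τ h with rfl | rfl | h'
    · exact ⟨p, hp, hpne, (headI_append hpne).symm⟩
    · refine ⟨rcPath q, hq.rcPath', by simpa using hqne, ?_⟩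
      rw [headI_rcPath hqne, headI_rcPath hmne, getLastD_append [] hqne]
    · exact ⟨τ, h', hinv.ne τ h', rfl⟩
  have bnd : ∀ σ' τ', Memb P σ' → Memb P τ' → σ' ≠ [] → τ' ≠ [] →
      rc (σ'.getLastD []) ≠ τ'.headI →
      ov (σ'.getLastD []) (τ'.headI) ≤ ov (superstr p) (superstr q) := by
    intro σ' τ' hσ hτ hσne hτne hexcl
    have hvalid : ValidPairP P σ' τ' := by
      refine ⟨hσ, hτ, ?_⟩
      by_cases h1 : superstr σ' = superstr τ'
      · exact Or.inl h1
      refine Or.inr ⟨h1, ?_⟩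
      intro h2
      have hs6 : superstr (rcPath σ') = superstr τ' := by rw [superstr_rcPath, h2]
      have hpre1 : τ'.headI <+: superstr τ' := headI_prefix_superstr τ' hτne
      have hpre2 : rc (σ'.getLastD []) <+: superstr τ' := by
        have := headI_prefix_superstr (rcPath σ') (by simpa using hσne)
        rwa [headI_rcPath hσne, hs6] at this
      have hm1 : τ'.headI ∈ S ∨ rc τ'.headI ∈ S := hinv.ins τ' hτ _ (headI_mem hτne)
      have hm2 : rc (σ'.getLastD []) ∈ S ∨ rc (rc (σ'.getLastD [])) ∈ S := by
        rcases hinv.ins σ' hσ _ (getLastD_mem hσne) with h | h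
        · exact Or.inr (by simpa using h)
        · exact Or.inl h
      rcases le_total (rc (σ'.getLastD [])).length (τ'.headI).length with hle | hle
      · have hpp := List.prefix_of_prefix_length_le hpre2 hpre1 hle
        by_cases heq : rc (σ'.getLastD []) = τ'.headI
        · exact hexcl heq
        · exact hS _ hm2 _ hm1 heq hpp.isInfix
      · have hpp := List.prefix_of_prefix_length_le hpre1 hpre2 hle
        by_cases heq : τ'.headI = rc (σ'.getLastD [])
        · exact hexcl heq.symm
        · exact hS _ hm1 _ hm2 heq hpp.isInfix
    exact le_trans (ov_last_head_le hσne hτne) (hmax σ' τ' hvalid)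
  have hE : ov (superstr p) (superstr q) ≤ ov (p.getLastD []) q.headI := by
    refine key_lemma hS hpne hqne (hinv.ins p hp) (hinv.ins q hq) hcross ?_ ?_
    · intro c d hadj
      exact hinv.edl q hq c d hadj p hp
        (hcross _ (getLastD_mem hpne) d hadj.mem_right).2
    · intro c d hadj
      exact hinv.edr p hp c d hadj q hq
        (hcross c hadj.mem_left _ (headI_mem hqne)).2
  have newb : ∀ σ τ, Memb P' σ → Memb P' τ → rc (σ.getLastD []) ≠ τ.headI →
      ov (σ.getLastD []) τ.headI ≤ ov (p.getLastD []) q.headI := by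
    intro σ τ hσ hτ hexcl
    obtain ⟨σ', hσ', hσ'ne, hσl⟩ := tailmap σ hσ
    obtain ⟨τ', hτ', hτ'ne, hτh⟩ := headmap τ hτ
    rw [← hσl, ← hτh] at hexcl ⊢
    exact le_trans (bnd σ' τ' hσ' hτ' hσ'ne hτ'ne hexcl) hE
  -- the triple of edge bounds
  have oldbound : ∀ π, Memb P π → ∀ c d, Adj π c d →
      (∀ σ τ, Memb P' σ → Memb P' τ → rc (σ.getLastD []) ≠ τ.headI →
        ov (σ.getLastD []) τ.headI ≤ ov c d) ∧
      (∀ σ, Memb P' σ → rc (σ.getLastD []) ≠ d → ov (σ.getLastD []) d ≤ ov c d) ∧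
      (∀ τ, Memb P' τ → rc c ≠ τ.headI → ov c τ.headI ≤ ov c d) := by
    intro π hπ c d hadj
    refine ⟨?_, ?_, ?_⟩
    · intro σ τ hσ hτ he
      obtain ⟨σ', hσ', -, hσl⟩ := tailmap σ hσ
      obtain ⟨τ', hτ', -, hτh⟩ := headmap τ hτ
      rw [← hσl, ← hτh] at he ⊢
      exact hinv.full π hπ c d hadj σ' τ' hσ' hτ' he
    · intro σ hσ he
      obtain ⟨σ', hσ', -, hσl⟩ := tailmap σ hσ
      rw [← hσl] at he ⊢
      exact hinv.edl π hπ c d hadj σ' hσ' he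
    · intro τ hτ he
      obtain ⟨τ', hτ', -, hτh⟩ := headmap τ hτ
      rw [← hτh] at he ⊢
      exact hinv.edr π hπ c d hadj τ' hτ' he
  have mbound : ∀ c d, Adj (p ++ q) c d →
      (∀ σ τ, Memb P' σ → Memb P' τ → rc (σ.getLastD []) ≠ τ.headI →
        ov (σ.getLastD []) τ.headI ≤ ov c d) ∧
      (∀ σ, Memb P' σ → rc (σ.getLastD []) ≠ d → ov (σ.getLastD []) d ≤ ov c d) ∧
      (∀ τ, Memb P' τ → rc c ≠ τ.headI → ov c τ.headI ≤ ov c d) := by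
    intro c d hadj
    rcases adj_append_cases hadj with hadj' | ⟨-, -, hc, hd⟩ | hadj'
    · exact oldbound p hp c d hadj'
    · subst hc; subst hd
      refine ⟨fun σ τ hσ hτ he => newb σ τ hσ hτ he, ?_, ?_⟩
      · intro σ hσ he
        obtain ⟨σ', hσ', hσ'ne, hσl⟩ := tailmap σ hσ
        rw [← hσl] at he ⊢
        exact le_trans (bnd σ' q hσ' hq hσ'ne hqne he) hE
      · intro τ hτ he
        obtain ⟨τ', hτ', hτ'ne, hτh⟩ := headmap τ hτ
        rw [← hτh] at he ⊢
        exact le_trans (bnd p τ' hp hτ' hpne hτ'ne he) hE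
    · exact oldbound q hq c d hadj'
  have allbound : ∀ π, Memb P' π → ∀ c d, Adj π c d →
      (∀ σ τ, Memb P' σ → Memb P' τ → rc (σ.getLastD []) ≠ τ.headI →
        ov (σ.getLastD []) τ.headI ≤ ov c d) ∧
      (∀ σ, Memb P' σ → rc (σ.getLastD []) ≠ d → ov (σ.getLastD []) d ≤ ov c d) ∧
      (∀ τ, Memb P' τ → rc c ≠ τ.headI → ov c τ.headI ≤ ov c d) := by
    intro π hπ c d hadj
    rcases membCases π hπ with rfl | rfl | hold
    · exact mbound c d hadj
    · have hadj' : Adj (p ++ q) (rc d) (rc c) := adj_rcPath hadj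
      obtain ⟨b1, b2, b3⟩ := mbound (rc d) (rc c) hadj'
      have hovcd : ov c d = ov (rc d) (rc c) := (ov_rc c d).symm
      refine ⟨?_, ?_, ?_⟩
      · intro σ τ hσ hτ he; rw [hovcd]; exact b1 σ τ hσ hτ he
      · intro σ hσ he
        have hσne : σ ≠ [] := ne' σ hσ
        have e1 : ov (σ.getLastD []) d = ov (rc d) ((rcPath σ).headI) := by
          rw [headI_rcPath hσne]
          exact (ov_rc (σ.getLastD []) d).symm
        rw [e1, hovcd]
        refine b3 (rcPath σ) hσ.rcPath' ?_
        rw [rc_rc, headI_rcPath hσne]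
        intro hh; exact he (by rw [← hh])
      · intro τ hτ he
        have hτne : τ ≠ [] := ne' τ hτ
        have e1 : ov c (τ.headI) = ov ((rcPath τ).getLastD []) (rc c) := by
          rw [getLastD_rcPath hτne]
          exact (ov_rc c τ.headI).symm
        rw [e1, hovcd]
        refine b2 (rcPath τ) hτ.rcPath' ?_
        rw [getLastD_rcPath hτne, rc_rc]
        intro hh; exact he (by rw [hh])
    · exact oldbound π hold c d hadj
  -- assemble the invariant
  refine ⟨ne', ?_, ?_, ?_, ?_, ?_, ?_⟩
  · -- ins
    intro π h x hx
    rcases membCases π h with rfl | rfl | h'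
    · rcases List.mem_append.mp hx with h' | h'
      · exact hinv.ins p hp x h'
      · exact hinv.ins q hq x h'
    · have : rc x ∈ p ++ q := mem_rcPath.mp hx
      rcases List.mem_append.mp this with h' | h'
      · rcases hinv.ins p hp (rc x) h' with h'' | h''
        · exact Or.inr h''
        · exact Or.inl (by simpa using h'')
      · rcases hinv.ins q hq (rc x) h' with h'' | h''
        · exact Or.inr h''
        · exact Or.inl (by simpa using h'')
    · exact hinv.ins π h' x hx
  · -- pwr
    intro π h
    rcases membCases π h with rfl | rfl | h'
    · exact List.pairwise_append.mpr ⟨hinv.pwr p hp, hinv.pwr q hq,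
        fun a ha b hb => hcross a ha b hb⟩
    · exact pairwise_R_rcPath (List.pairwise_append.mpr ⟨hinv.pwr p hp, hinv.pwr q hq,
        fun a ha b hb => hcross a ha b hb⟩)
    · exact hinv.pwr π h'
  · -- disj
    intro π π' hπ hπ' hne1 hne2
    have crossM : ∀ r, Memb P r → r ≠ p → r ≠ rcPath p → r ≠ q → r ≠ rcPath q →
        CrossR (p ++ q) r := by
      intro r hr h1 h2 h3 h4
      exact CrossR.append_left (hinv.disj p r hp hr h1 h2) (hinv.disj q r hq hr h3 h4)
    rcases membCases π hπ with rfl | rfl | holdπ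
    · rcases membCases π' hπ' with rfl | rfl | holdπ'
      · exact absurd rfl hne1
      · exact absurd rfl hne2
      · obtain ⟨hm, h1, h2, h3, h4⟩ := old_surv π' hπ' hne1 hne2
        exact crossM π' hm h1 h2 h3 h4
    · rcases membCases π' hπ' with rfl | rfl | holdπ'
      · exact absurd (by rw [rcPath_rcPath]) (Ne.symm hne2)
      · exact absurd rfl hne1
      · obtain ⟨hm, h1, h2, h3, h4⟩ := old_surv π' hπ'
          (by rwa [rcPath_rcPath] at hne2) hne1
        exact (crossM π' hm h1 h2 h3 h4).rcPath_left
    · rcases membCases π' hπ' with rfl | rfl | holdπ'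
      · have hπm : π ≠ p ++ q := Ne.symm hne1
        have hπrcm : π ≠ rcPath (p ++ q) := by
          intro hh
          exact hne2 (by rw [hh, rcPath_rcPath])
        obtain ⟨hm, h1, h2, h3, h4⟩ := old_surv π hπ hπm hπrcm
        exact (crossM π hm h1 h2 h3 h4).symm
      · have hπm : π ≠ p ++ q := by
          intro hh
          exact hne2 (by rw [hh])
        have hπrcm : π ≠ rcPath (p ++ q) := Ne.symm hne1
        obtain ⟨hm, h1, h2, h3, h4⟩ := old_surv π hπ hπm hπrcm
        exact ((crossM π hm h1 h2 h3 h4).symm).rcPath_right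
      · exact hinv.disj π π' holdπ holdπ' hne1 hne2
  · exact fun π h c d hadj σ τ hσ hτ he => (allbound π h c d hadj).1 σ τ hσ hτ he
  · exact fun π h c d hadj σ hσ he => (allbound π h c d hadj).2.1 σ hσ he
  · exact fun π h c d hadj τ hτ he => (allbound π h c d hadj).2.2 τ hτ he

end SCS
namespace SCS
open List

lemma main_lemma {S : Finset Str} (hS : SubstrFree S) {P : Finset (List Str)}
    {C : Finset (List Str)} (hex : MGreedyCyc P C) :
    Inv S P → ∀ π ∈ C, ∀ c d, Adj π c d →
      ov (π.getLastD []) (π.headI) ≤ ov c d := by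
  induction hex with
  | done => intro _ π hπ; simp at hπ
  | close P C x hx hmax h ih =>
    intro hinv π hπ c d hadj
    rcases Finset.mem_insert.mp hπ with rfl | hπC
    · -- the closed cycle is π itself
      have hπne : π ≠ [] := hinv.ne π hx
      refine hinv.full π hx c d hadj π π hx hx ?_
      -- rc (π.getLastD []) ≠ π.headI
      cases π with
      | nil => exact absurd rfl hπne
      | cons h₀ t =>
        have hlen := hadj.length_ge
        have htne : t ≠ [] := by
          cases t with
          | nil => simp at hlen
          | cons a b => simp
        have hpw := hinv.pwr _ hx
        rw [List.pairwise_cons] at hpw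
        have hmem : (h₀ :: t).getLastD [] ∈ t := by
          rw [getLastD_cons' h₀ [] htne]
          exact getLastD_mem htne
        obtain ⟨-, h2⟩ := hpw.1 _ hmem
        show rc ((h₀ :: t).getLastD []) ≠ (h₀ :: t).headI
        intro hh
        apply h2
        have := congrArg rc hh
        rw [rc_rc] at this
        rw [this]; rfl
    · exact ih (inv_close hinv) π hπC c d hadj
  | merge P C p q hp hq hne hrc hmax h ih =>
    intro hinv π hπ c d hadj
    exact ih (inv_merge hS hinv hp hq hne hrc hmax) π hπ c d hadj

end SCS

/-- in any execution of MGREEDY-RC, the closing edge of each closed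
cycle has the smallest overlap among the edges of the cycle. -/
theorem closing_edge_smallest_overlap
    (S : Finset Str) (hS : SubstrFree S)
    (C : Finset (List Str)) (hex : MGreedyCyc (S.image fun s => [s]) C)
    (p : List Str) (hp : p ∈ C) (hpne : p ≠ [])
    (k : ℕ) (hk : k + 1 < p.length) :
    ov (p.getLast hpne) (p.head hpne) ≤ ov (p.getD k []) (p.getD (k + 1) []) := by
  have hadj := SCS.adj_getD hk
  have := SCS.main_lemma hS hex (SCS.inv_init S) p hp _ _ hadj
  rwa [SCS.getLast_eq_getLastD p hpne [], SCS.head_eq_headI p hpne]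
end
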